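/- arXiv:2409.01428 — 6 statements merged into one kernel-verified Lean document; each statement's English description precedes it below -/
import Mathlib

section
/- Let U be a finite set of vertices with q(U) quadruples of which q_good(U) are good, and let ε = q_good(U)/(8 q(U)). Then any vertex a ∈ U participating in the maximum number of good quadruples is U-good, i.e., there exists a subset U_a ⊆ U of size at least ⌈4ε(|U|-1)⌉ such that for every b ∈ U_a, the number of pairs (c,d) in U making {(a,b),(c,d)} a good quadruple is at least ⌈4ε·C(|U|-2,2)⌉, provided |U| ≥ max(w,4) and every max(w,4)-subset of vertices contains a good quadruple. -/
open SimpleGraph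

def interval {V : Type*} (G : SimpleGraph V) (u v : V) : Set V :=
  {x | G.dist u x + G.dist x v = G.dist u v}

def GoodQuad {V : Type*} (G : SimpleGraph V) (a b c d : V) : Prop :=
  a ≠ b ∧ a ≠ c ∧ a ≠ d ∧ b ≠ c ∧ b ≠ d ∧ c ≠ d ∧
    (interval G a b ∩ interval G c d).Nonempty

lemma interval_comm {V : Type*} (G : SimpleGraph V) (u v : V) :
    interval G u v = interval G v u := by
  ext x
  simp only [interval, Set.mem_setOf_eq]
  rw [SimpleGraph.dist_comm (u := u) (v := x), SimpleGraph.dist_comm (u := x) (v := v), SimpleGraph.dist_comm (u := u) (v := v)]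
  omega

lemma GoodQuad.symm_left {V : Type*} {G : SimpleGraph V} {a b c d : V}
    (h : GoodQuad G a b c d) : GoodQuad G b a c d := by
  obtain ⟨h1, h2, h3, h4, h5, h6, h7⟩ := h
  exact ⟨h1.symm, h4, h5, h2, h3, h6, by rwa [interval_comm G b a]⟩

lemma GoodQuad.swap {V : Type*} {G : SimpleGraph V} {a b c d : V}
    (h : GoodQuad G a b c d) : GoodQuad G c d a b := by
  obtain ⟨h1, h2, h3, h4, h5, h6, h7⟩ := h
  exact ⟨h6, h2.symm, h4.symm, h3.symm, h5.symm, h1, by rwa [Set.inter_comm]⟩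

lemma finset_pair_eq_pair_iff {α : Type*} [DecidableEq α] {a b c d : α} :
    ({a, b} : Finset α) = {c, d} ↔ a = c ∧ b = d ∨ a = d ∧ b = c := by
  rw [← Finset.coe_inj]
  simp only [Finset.coe_insert, Finset.coe_singleton]
  exact Set.pair_eq_pair_iff
/-- Quadruples `{(a,b),(c,d)}` over `U`, encoded as `{{a,b},{c,d}}`. -/
def QuadSet {V : Type*} [DecidableEq V] (U : Finset V) : Set (Finset (Finset V)) :=
  {Q | ∃ a b c d : V, a ∈ U ∧ b ∈ U ∧ c ∈ U ∧ d ∈ U ∧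
    a ≠ b ∧ a ≠ c ∧ a ≠ d ∧ b ≠ c ∧ b ≠ d ∧ c ≠ d ∧
    Q = {{a, b}, {c, d}}}

/-- Good quadruples over `U`. -/
def goodQuadSet {V : Type*} [DecidableEq V] (G : SimpleGraph V) (U : Finset V) :
    Set (Finset (Finset V)) :=
  {Q | ∃ a b c d : V, a ∈ U ∧ b ∈ U ∧ c ∈ U ∧ d ∈ U ∧
    GoodQuad G a b c d ∧ Q = {{a, b}, {c, d}}}

/-- Good quadruples over `U` containing the vertex `a`. -/
def goodQuadsContaining {V : Type*} [DecidableEq V] (G : SimpleGraph V) (U : Finset V)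
    (a : V) : Set (Finset (Finset V)) :=
  {Q ∈ goodQuadSet G U | ∃ s ∈ Q, a ∈ s}

/-- The set of (unordered) pairs `{c,d} ⊆ U` such that `{(a,b),(c,d)}` is a good
quadruple. -/
def goodPairs {V : Type*} [DecidableEq V] (G : SimpleGraph V) (U : Finset V)
    (a b : V) : Set (Finset V) :=
  {s | ∃ c ∈ U, ∃ d ∈ U, s = ({c, d} : Finset V) ∧ GoodQuad G a b c d}

/-- `ε_U = q_good(U) / (8 q(U))`. -/
noncomputable def epsU {V : Type*} [DecidableEq V] (G : SimpleGraph V) (U : Finset V) : ℚ :=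
  ((goodQuadSet G U).ncard : ℚ) / (8 * ((QuadSet U).ncard : ℚ))

/-- `a` is a `U`-good node. -/
def UGood {V : Type*} [DecidableEq V] (G : SimpleGraph V) (U : Finset V) (a : V) : Prop :=
  ∃ Ua : Finset V, Ua ⊆ U ∧
    ⌈4 * epsU G U * ((U.card : ℚ) - 1)⌉ ≤ (Ua.card : ℤ) ∧
    ∀ b ∈ Ua,
      ⌈4 * epsU G U * (((U.card - 2).choose 2 : ℕ) : ℚ)⌉ ≤ ((goodPairs G U a b).ncard : ℤ)
section
variable {V : Type*} [DecidableEq V] [Fintype V]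

lemma quadSet_lower (U : Finset V) : 3 * U.card.choose 4 ≤ (QuadSet U).ncard := by
  classical
  have hfin : (QuadSet U).Finite := Set.toFinite _
  rw [Set.ncard_eq_toFinset_card _ hfin]
  set QF := hfin.toFinset with hQF
  set D := (U.powersetCard 4).sigma (fun s => s.powersetCard 2) with hD
  set f : (Σ _ : Finset V, Finset V) → Finset (Finset V) :=
    fun p => {p.2, p.1 \ p.2} with hf
  have hmem : ∀ p ∈ D, ∃ s t : Finset V, p = ⟨s, t⟩ ∧ s ⊆ U ∧ s.card = 4 ∧
      t ⊆ s ∧ t.card = 2 := by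
    rintro ⟨s, t⟩ hp
    rw [hD, Finset.mem_sigma] at hp
    obtain ⟨hs, ht⟩ := hp
    rw [Finset.mem_powersetCard] at hs ht
    exact ⟨s, t, rfl, hs.1, hs.2, ht.1, ht.2⟩
  have himg : ∀ p ∈ D, f p ∈ QF := by
    intro p hp
    obtain ⟨s, t, rfl, hsU, hs4, hts, ht2⟩ := hmem p hp
    obtain ⟨a, b, hab, habt⟩ := Finset.card_eq_two.mp ht2
    have hst2 : (s \ t).card = 2 := by
      rw [Finset.card_sdiff_of_subset hts, hs4, ht2]
    obtain ⟨c, d, hcd, hcdt⟩ := Finset.card_eq_two.mp hst2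
    have hc : c ∈ s \ t := by rw [hcdt]; simp
    have hd : d ∈ s \ t := by rw [hcdt]; simp
    rw [Finset.mem_sdiff] at hc hd
    have haU : a ∈ U := hsU (hts (by rw [habt]; simp))
    have hbU : b ∈ U := hsU (hts (by rw [habt]; simp))
    have hac : a ≠ c := by rintro rfl; exact hc.2 (by rw [habt]; simp)
    have had : a ≠ d := by rintro rfl; exact hd.2 (by rw [habt]; simp)
    have hbc : b ≠ c := by rintro rfl; exact hc.2 (by rw [habt]; simp)
    have hbd : b ≠ d := by rintro rfl; exact hd.2 (by rw [habt]; simp)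
    rw [hQF, Set.Finite.mem_toFinset]
    exact ⟨a, b, c, d, haU, hbU, hsU hc.1, hsU hd.1, hab, hac, had, hbc, hbd, hcd, by
      rw [hf]; simp only; rw [hcdt, habt]⟩
  have hfiber : ∀ Q ∈ D.image f, (D.filter (fun p => f p = Q)).card ≤ 2 := by
    intro Q hQ
    obtain ⟨p0, hp0, rfl⟩ := Finset.mem_image.mp hQ
    obtain ⟨s, t, rfl, hsU, hs4, hts, ht2⟩ := hmem p0 hp0
    have hsub : D.filter (fun p => f p = f ⟨s, t⟩) ⊆
        {⟨s, t⟩, ⟨s, s \ t⟩} := by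
      intro p hp
      rw [Finset.mem_filter] at hp
      obtain ⟨s', t', rfl, hsU', hs4', hts', ht2'⟩ := hmem p hp.1
      have heq : ({t', s' \ t'} : Finset (Finset V)) = {t, s \ t} := hp.2
      have hs'eq : t' ∪ (s' \ t') = s' := Finset.union_sdiff_of_subset hts'
      have hseq : t ∪ (s \ t) = s := Finset.union_sdiff_of_subset hts
      rcases finset_pair_eq_pair_iff.mp heq with ⟨h1, h2⟩ | ⟨h1, h2⟩
      · have hss : s' = s := by rw [← hs'eq, h2, h1]; exact hseq
        subst hss; subst h1; simp
      · have hss : s' = s := by rw [← hs'eq, h2, h1, Finset.union_comm]; exact hseq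
        subst hss; subst h1; simp [h2]
    calc (D.filter (fun p => f p = f ⟨s, t⟩)).card ≤ _ := Finset.card_le_card hsub
      _ ≤ 2 := Finset.card_insert_le _ _ |>.trans (by simp)
  have hcount : D.card ≤ 2 * (D.image f).card := Finset.card_le_mul_card_image (f := f) D 2 hfiber
  have hDcard : D.card = U.card.choose 4 * 6 := by
    rw [hD, Finset.card_sigma]
    rw [Finset.sum_congr rfl (fun s hs => ?_), Finset.sum_const,
      Finset.card_powersetCard, smul_eq_mul]
    rw [Finset.card_powersetCard, (Finset.mem_powersetCard.mp hs).2]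
    decide
  have himgQF : (D.image f).card ≤ QF.card := by
    apply Finset.card_le_card
    intro Q hQ
    obtain ⟨p, hp, rfl⟩ := Finset.mem_image.mp hQ
    exact himg p hp
  omega

end
section
variable {V : Type*} [DecidableEq V] [Fintype V] {G : SimpleGraph V} {U : Finset V}

omit [Fintype V] in
lemma mem_gqc_elim {a : V} {Q : Finset (Finset V)}
    (hQ : Q ∈ goodQuadsContaining G U a) :
    ∃ b c d : V, b ∈ U ∧ c ∈ U ∧ d ∈ U ∧ GoodQuad G a b c d ∧
      Q = {{a, b}, {c, d}} := by
  obtain ⟨⟨x, y, c, d, hx, hy, hc, hd, hgood, rfl⟩, s, hs, has⟩ := hQ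
  rw [Finset.mem_insert, Finset.mem_singleton] at hs
  rcases hs with rfl | rfl
  · rw [Finset.mem_insert, Finset.mem_singleton] at has
    rcases has with rfl | rfl
    · exact ⟨y, c, d, hy, hc, hd, hgood, rfl⟩
    · exact ⟨x, c, d, hx, hc, hd, hgood.symm_left, by rw [Finset.pair_comm x a]⟩
  · rw [Finset.mem_insert, Finset.mem_singleton] at has
    rcases has with rfl | rfl
    · exact ⟨d, x, y, hd, hx, hy, hgood.swap, Finset.pair_comm _ _⟩
    · exact ⟨c, x, y, hc, hx, hy, hgood.swap.symm_left,
        by rw [Finset.pair_comm c a]; exact Finset.pair_comm _ _⟩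

lemma sum_gqc (G : SimpleGraph V) (U : Finset V) :
    ∑ a' ∈ U, (goodQuadsContaining G U a').ncard = 4 * (goodQuadSet G U).ncard := by
  classical
  have hfin : (goodQuadSet G U).Finite := Set.toFinite _
  set GQ := hfin.toFinset with hGQ
  have hmemGQ : ∀ Q, Q ∈ GQ ↔ Q ∈ goodQuadSet G U := fun Q => Set.Finite.mem_toFinset _
  have h1 : ∀ a' : V, (goodQuadsContaining G U a').ncard =
      (GQ.filter (fun Q => ∃ s ∈ Q, a' ∈ s)).card := by
    intro a'
    rw [← Set.ncard_coe_finset]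
    congr 1
    ext Q
    simp only [goodQuadsContaining, Set.mem_setOf_eq, Finset.coe_filter, hmemGQ]
  calc ∑ a' ∈ U, (goodQuadsContaining G U a').ncard
      = ∑ a' ∈ U, (GQ.filter (fun Q => ∃ s ∈ Q, a' ∈ s)).card := by
        exact Finset.sum_congr rfl fun a' _ => h1 a'
    _ = ∑ a' ∈ U, ∑ Q ∈ GQ, if ∃ s ∈ Q, a' ∈ s then 1 else 0 := by
        exact Finset.sum_congr rfl fun a' _ => Finset.card_filter _ _
    _ = ∑ Q ∈ GQ, ∑ a' ∈ U, if ∃ s ∈ Q, a' ∈ s then 1 else 0 := Finset.sum_comm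
    _ = ∑ Q ∈ GQ, (U.filter (fun a' => ∃ s ∈ Q, a' ∈ s)).card := by
        exact Finset.sum_congr rfl fun Q _ => (Finset.card_filter _ _).symm
    _ = ∑ Q ∈ GQ, 4 := by
        refine Finset.sum_congr rfl fun Q hQ => ?_
        obtain ⟨a, b, c, d, haU, hbU, hcU, hdU,
          ⟨hab, hac, had, hbc, hbd, hcd, -⟩, rfl⟩ := (hmemGQ Q).mp hQ
        have : U.filter (fun a' => ∃ s ∈ ({{a,b},{c,d}} : Finset (Finset V)), a' ∈ s)
            = {a, b, c, d} := by
          ext x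
          simp only [Finset.mem_filter, Finset.mem_insert, Finset.mem_singleton]
          constructor
          · rintro ⟨-, s, (rfl | rfl), hx⟩ <;>
              simp only [Finset.mem_insert, Finset.mem_singleton] at hx <;> tauto
          · rintro (rfl | rfl | rfl | rfl)
            · exact ⟨haU, _, Or.inl rfl, Finset.mem_insert_self _ _⟩
            · exact ⟨hbU, _, Or.inl rfl,
                Finset.mem_insert_of_mem (Finset.mem_singleton_self _)⟩
            · exact ⟨hcU, _, Or.inr rfl, Finset.mem_insert_self _ _⟩
            · exact ⟨hdU, _, Or.inr rfl,
                Finset.mem_insert_of_mem (Finset.mem_singleton_self _)⟩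
        rw [this]
        rw [Finset.card_insert_of_notMem (by simp [hab, hac, had]),
          Finset.card_insert_of_notMem (by simp [hbc, hbd]),
          Finset.card_insert_of_notMem (by simp [hcd]), Finset.card_singleton]
    _ = 4 * (goodQuadSet G U).ncard := by
        rw [Finset.sum_const, smul_eq_mul, Set.ncard_eq_toFinset_card _ hfin, mul_comm]

end
section
variable {V : Type*} [DecidableEq V] [Fintype V] {G : SimpleGraph V} {U : Finset V}

lemma gqc_eq_sum (G : SimpleGraph V) (U : Finset V) (a : V) (ha : a ∈ U) :
    (goodQuadsContaining G U a).ncard =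
      ∑ b ∈ U.erase a, (goodPairs G U a b).ncard := by
  classical
  have hfinA : (goodQuadsContaining G U a).Finite := Set.toFinite _
  have hfinP : ∀ b : V, (goodPairs G U a b).Finite := fun _ => Set.toFinite _
  rw [Set.ncard_eq_toFinset_card _ hfinA]
  have hsum : ∑ b ∈ U.erase a, (goodPairs G U a b).ncard
      = ((U.erase a).sigma (fun b => (hfinP b).toFinset)).card := by
    rw [Finset.card_sigma]
    exact Finset.sum_congr rfl fun b _ => Set.ncard_eq_toFinset_card _ _
  rw [hsum]
  refine (Finset.card_bij (fun (p : (Σ _ : V, Finset V)) _ => ({{a, p.1}, p.2} : Finset (Finset V))) ?_ ?_ ?_).symm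
  · rintro ⟨b, s⟩ hp
    rw [Finset.mem_sigma, Set.Finite.mem_toFinset] at hp
    obtain ⟨hb, c, hc, d, hd, rfl, hgood⟩ := hp
    rw [Set.Finite.mem_toFinset]
    refine ⟨⟨a, b, c, d, ha, Finset.mem_of_mem_erase hb, hc, hd, hgood, rfl⟩,
      _, Finset.mem_insert_self _ _, Finset.mem_insert_self _ _⟩
  · rintro ⟨b, s⟩ hp ⟨b', s'⟩ hp' heq
    rw [Finset.mem_sigma, Set.Finite.mem_toFinset] at hp hp'
    obtain ⟨hb, c, hc, d, hd, rfl, hgood⟩ := hp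
    obtain ⟨hb', c', hc', d', hd', rfl, hgood'⟩ := hp'
    have hnab : a ∉ ({c', d'} : Finset V) := by
      simp only [Finset.mem_insert, Finset.mem_singleton]
      push_neg
      exact ⟨hgood'.2.1, hgood'.2.2.1⟩
    rcases finset_pair_eq_pair_iff.mp heq with ⟨h1, h2⟩ | ⟨h1, h2⟩ <;> dsimp only at h1 h2
    · have hbb : b = b' := by
        have := h1 ▸ Finset.mem_insert_of_mem (Finset.mem_singleton_self b)
        rcases Finset.mem_insert.mp this with h | h
        · exact absurd h (Finset.ne_of_mem_erase hb)
        · exact Finset.mem_singleton.mp h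
      subst hbb
      simpa using h2
    · exact absurd (h1 ▸ Finset.mem_insert_self a _) hnab
  · intro Q hQ
    rw [Set.Finite.mem_toFinset] at hQ
    obtain ⟨b, c, d, hb, hc, hd, hgood, rfl⟩ := mem_gqc_elim hQ
    refine ⟨⟨b, {c, d}⟩, ?_, rfl⟩
    rw [Finset.mem_sigma, Set.Finite.mem_toFinset]
    exact ⟨Finset.mem_erase.mpr ⟨hgood.1.symm, hb⟩, c, hc, d, hd, rfl, hgood⟩

lemma goodPairs_ncard_le (a b : V) (ha : a ∈ U) (hb : b ∈ U.erase a) :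
    (goodPairs G U a b).ncard ≤ (U.card - 2).choose 2 := by
  classical
  have hsub : goodPairs G U a b ⊆ ↑(((U.erase a).erase b).powersetCard 2) := by
    rintro s ⟨c, hc, d, hd, rfl, hgood⟩
    obtain ⟨-, hac, had, hbc, hbd, hcd, -⟩ := hgood
    rw [Finset.mem_coe, Finset.mem_powersetCard]
    constructor
    · intro x hx
      rcases Finset.mem_insert.mp hx with rfl | hx
      · exact Finset.mem_erase.mpr ⟨hbc.symm, Finset.mem_erase.mpr ⟨hac.symm, hc⟩⟩
      · rw [Finset.mem_singleton] at hx
        subst hx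
        exact Finset.mem_erase.mpr ⟨hbd.symm, Finset.mem_erase.mpr ⟨had.symm, hd⟩⟩
    · exact Finset.card_pair hcd
  calc (goodPairs G U a b).ncard
      ≤ (↑(((U.erase a).erase b).powersetCard 2) : Set (Finset V)).ncard :=
        Set.ncard_le_ncard hsub (Set.toFinite _)
    _ = (((U.erase a).erase b).powersetCard 2).card := Set.ncard_coe_finset _
    _ = (U.card - 2).choose 2 := by
        rw [Finset.card_powersetCard, Finset.card_erase_of_mem hb,
          Finset.card_erase_of_mem ha]
        congr 1

omit [Fintype V] in
lemma goodQuadSet_mono {S : Finset V} (hS : S ⊆ U) :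
    goodQuadSet G S ⊆ goodQuadSet G U := by
  rintro Q ⟨a, b, c, d, haS, hbS, hcS, hdS, hgood, rfl⟩
  exact ⟨a, b, c, d, hS haS, hS hbS, hS hcS, hS hdS, hgood, rfl⟩

end
lemma nat24choose (k : ℕ) : 24 * (k+4).choose 4 = (k+4)*(k+3)*(k+2)*(k+1) := by
  have h := Nat.descFactorial_eq_factorial_mul_choose (k+4) 4
  simp [Nat.descFactorial, Nat.factorial] at h
  rw [← h]; ring

lemma nat2choose (k : ℕ) : 2 * (k+2).choose 2 = (k+2)*(k+1) := by
  have h := Nat.descFactorial_eq_factorial_mul_choose (k+2) 2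
  simp [Nat.descFactorial, Nat.factorial] at h
  rw [← h]; ring

lemma arith_main (kq gq qq Sq Aq Cnq ch4q Tq : ℚ)
    (hg : 0 < gq) (hq0 : 0 < qq)
    (hq3 : 3 * ch4q ≤ qq)
    (h24 : 24 * ch4q = (kq+4)*(kq+3)*(kq+2)*(kq+1))
    (hC2 : 2 * Cnq = (kq+2)*(kq+1))
    (hCpos : 0 < Cnq)
    (hkpos : 0 ≤ kq)
    (hlow : 4 * gq ≤ (kq+4) * Sq)
    (hupper : Sq ≤ Aq * Cnq + (kq+3) * (Tq - 1))
    (hA : Aq < 4 * (gq/(8*qq)) * (kq+3))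
    (hT : Tq - 1 < 4 * (gq/(8*qq)) * Cnq) : False := by
  have hεq : 8 * (gq/(8*qq)) * qq = gq := by field_simp
  set ε : ℚ := gq/(8*qq) with hε
  have hk3 : (0:ℚ) < kq + 3 := by linarith
  have hS_up : Sq < 8 * ε * (kq+3) * Cnq := by
    have m1 : Aq * Cnq < (4 * ε * (kq+3)) * Cnq := mul_lt_mul_of_pos_right hA hCpos
    have m2 : (kq+3) * (Tq - 1) < (kq+3) * (4 * ε * Cnq) := mul_lt_mul_of_pos_left hT hk3
    nlinarith [hupper, m1, m2]
  have hn4 : (0:ℚ) < kq + 4 := by linarith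
  have e1 : 4 * gq < 8 * ε * (kq+4) * (kq+3) * Cnq := by
    have h := mul_lt_mul_of_pos_left hS_up hn4
    nlinarith [h, hlow]
  have e2 : 4 * gq * qq < gq * (kq+4) * (kq+3) * Cnq := by
    have h3 := mul_lt_mul_of_pos_right e1 hq0
    calc 4 * gq * qq < 8 * ε * (kq+4) * (kq+3) * Cnq * qq := h3
      _ = (8 * ε * qq) * ((kq+4) * ((kq+3) * Cnq)) := by ring
      _ = gq * (kq+4) * (kq+3) * Cnq := by rw [hεq]; ring
  have e3 : 8 * gq * qq < gq * (kq+4) * (kq+3) * ((kq+2) * (kq+1)) := by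
    calc 8 * gq * qq = 2 * (4 * gq * qq) := by ring
      _ < 2 * (gq * (kq+4) * (kq+3) * Cnq) := by linarith
      _ = gq * (kq+4) * (kq+3) * (2 * Cnq) := by ring
      _ = _ := by rw [hC2]
  have e5 : gq * (24 * ch4q) ≤ gq * (8 * qq) := by
    apply mul_le_mul_of_nonneg_left _ (le_of_lt hg)
    linarith
  have e6 : gq * (kq+4) * (kq+3) * ((kq+2) * (kq+1)) = gq * (24 * ch4q) := by
    rw [h24]; ring
  linarith [e3, e5, e6]

/-- if every `max w 4`-subset of vertices contains a good quadruple
and `|U| ≥ max w 4`, then any `a ∈ U` participating in the maximum number of good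
quadruples of `U` is `U`-good. -/
theorem stmt3 {V : Type*} [Fintype V] [DecidableEq V] (G : SimpleGraph V) (w : ℕ)
    (hall : ∀ S : Finset V, S.card = max w 4 → (goodQuadSet G S).Nonempty)
    (U : Finset V) (hU : max w 4 ≤ U.card) (a : V) (ha : a ∈ U)
    (hmax : ∀ a' ∈ U,
      (goodQuadsContaining G U a').ncard ≤ (goodQuadsContaining G U a).ncard) :
    UGood G U a := by
  classical
  have hn4 : 4 ≤ U.card := le_trans (le_max_right w 4) hU
  obtain ⟨k, hk⟩ : ∃ k, U.card = k + 4 := ⟨U.card - 4, by omega⟩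
  have hgpos : 0 < (goodQuadSet G U).ncard := by
    obtain ⟨S, hSU, hScard⟩ := Finset.exists_subset_card_eq hU
    obtain ⟨Q, hQ⟩ := hall S hScard
    exact (Set.ncard_pos (Set.toFinite _)).mpr ⟨Q, goodQuadSet_mono hSU hQ⟩
  have hqlow : 3 * U.card.choose 4 ≤ (QuadSet U).ncard := quadSet_lower U
  have hqpos : 0 < (QuadSet U).ncard :=
    lt_of_lt_of_le (Nat.mul_pos (by norm_num) (Nat.choose_pos (by omega))) hqlow
  have hgQpos : (0:ℚ) < ((goodQuadSet G U).ncard : ℚ) := by exact_mod_cast hgpos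
  have hqQpos : (0:ℚ) < ((QuadSet U).ncard : ℚ) := by exact_mod_cast hqpos
  have hεdef : epsU G U =
      ((goodQuadSet G U).ncard : ℚ) / (8 * ((QuadSet U).ncard : ℚ)) := rfl
  have hεpos : 0 < epsU G U := by
    rw [hεdef]
    apply div_pos hgQpos
    linarith
  have hCn2 : (U.card - 2).choose 2 = (k+2).choose 2 := by
    congr 1
    omega
  have hCnpos : 0 < (k+2).choose 2 := Nat.choose_pos (by omega)
  have hCnQpos : (0:ℚ) < (((k+2).choose 2 : ℕ) : ℚ) := by exact_mod_cast hCnpos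
  have hTpos : 1 ≤ ⌈4 * epsU G U * (((U.card - 2).choose 2 : ℕ) : ℚ)⌉ := by
    have h0 : (0:ℚ) < 4 * epsU G U * (((U.card - 2).choose 2 : ℕ) : ℚ) := by
      rw [hCn2]
      positivity
    have h := Int.ceil_pos.mpr h0
    omega
  set Ua : Finset V :=
    (U.erase a).filter (fun b =>
      ⌈4 * epsU G U * (((U.card - 2).choose 2 : ℕ) : ℚ)⌉
        ≤ ((goodPairs G U a b).ncard : ℤ)) with hUa
  refine ⟨Ua, (Finset.filter_subset _ _).trans (Finset.erase_subset _ _), ?_,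
    fun b hb => (Finset.mem_filter.mp hb).2⟩
  by_contra hcon
  push_neg at hcon
  -- counting facts
  have hdecomp : (goodQuadsContaining G U a).ncard
      = ∑ b ∈ U.erase a, (goodPairs G U a b).ncard := gqc_eq_sum G U a ha
  have hlow : 4 * (goodQuadSet G U).ncard ≤ U.card * (goodQuadsContaining G U a).ncard := by
    calc 4 * (goodQuadSet G U).ncard
        = ∑ a' ∈ U, (goodQuadsContaining G U a').ncard := (sum_gqc G U).symm
      _ ≤ ∑ a' ∈ U, (goodQuadsContaining G U a).ncard :=
          Finset.sum_le_sum (fun a' ha' => hmax a' ha')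
      _ = _ := by rw [Finset.sum_const, smul_eq_mul]
  have hcard_erase : (U.erase a).card = k + 3 := by
    rw [Finset.card_erase_of_mem ha]
    omega
  set T : ℤ := ⌈4 * epsU G U * (((U.card - 2).choose 2 : ℕ) : ℚ)⌉ with hT
  have hupper : ((goodQuadsContaining G U a).ncard : ℤ)
      ≤ (Ua.card : ℤ) * ((k+2).choose 2 : ℕ) + ((k:ℤ)+3) * (T - 1) := by
    have hsplit := Finset.sum_filter_add_sum_filter_not (U.erase a)
      (fun b => T ≤ ((goodPairs G U a b).ncard : ℤ))
      (fun b => ((goodPairs G U a b).ncard : ℤ))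
    have h1 : ∑ b ∈ Ua, ((goodPairs G U a b).ncard : ℤ)
        ≤ (Ua.card : ℤ) * ((k+2).choose 2 : ℕ) := by
      have h := Finset.sum_le_card_nsmul Ua (fun b => ((goodPairs G U a b).ncard : ℤ))
        (((k+2).choose 2 : ℕ) : ℤ) (fun b hb => by
          have hbe : b ∈ U.erase a := Finset.mem_of_mem_filter b hb
          have h2 := goodPairs_ncard_le (G := G) a b ha hbe
          rw [hCn2] at h2
          exact_mod_cast h2)
      simpa [nsmul_eq_mul] using h
    have h2 : ∑ b ∈ (U.erase a).filter
          (fun b => ¬ (T ≤ ((goodPairs G U a b).ncard : ℤ))),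
        ((goodPairs G U a b).ncard : ℤ)
        ≤ ((k:ℤ)+3) * (T - 1) := by
      have hb1 := Finset.sum_le_card_nsmul
        ((U.erase a).filter (fun b => ¬ (T ≤ ((goodPairs G U a b).ncard : ℤ))))
        (fun b => ((goodPairs G U a b).ncard : ℤ)) (T - 1)
        (fun b hb => by
          have h : ¬ (T ≤ ((goodPairs G U a b).ncard : ℤ)) :=
            (Finset.mem_filter.mp hb).2
          show ((goodPairs G U a b).ncard : ℤ) ≤ T - 1
          omega)
      rw [nsmul_eq_mul] at hb1
      have hb2 : (((U.erase a).filter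
          (fun b => ¬ (T ≤ ((goodPairs G U a b).ncard : ℤ)))).card : ℤ) ≤ (k:ℤ)+3 := by
        have hle : ((U.erase a).filter
            (fun b => ¬ (T ≤ ((goodPairs G U a b).ncard : ℤ)))).card ≤ (U.erase a).card :=
          Finset.card_le_card (Finset.filter_subset _ _)
        omega
      have hb3 := mul_le_mul_of_nonneg_right hb2 (by omega : (0:ℤ) ≤ T - 1)
      calc _ ≤ _ := hb1
        _ ≤ _ := hb3
    calc ((goodQuadsContaining G U a).ncard : ℤ)
        = ∑ b ∈ U.erase a, ((goodPairs G U a b).ncard : ℤ) := by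
          rw [hdecomp]; push_cast; rfl
      _ = _ + _ := hsplit.symm
      _ ≤ _ := add_le_add h1 h2
  -- pass to ℚ and conclude with arith_main
  have hnQ : (U.card : ℚ) = (k : ℚ) + 4 := by rw [hk]; push_cast; ring
  apply arith_main ((k:ℚ)) ((goodQuadSet G U).ncard : ℚ) ((QuadSet U).ncard : ℚ)
    ((goodQuadsContaining G U a).ncard : ℚ) (Ua.card : ℚ)
    (((k+2).choose 2 : ℕ) : ℚ) ((U.card.choose 4 : ℕ) : ℚ) ((T:ℤ) : ℚ)
    hgQpos hqQpos
  · exact_mod_cast hqlow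
  · have h := nat24choose k
    have hq : ((24 * (k+4).choose 4 : ℕ) : ℚ) = (((k+4)*(k+3)*(k+2)*(k+1) : ℕ) : ℚ) := by
      exact_mod_cast congrArg (Nat.cast (R := ℚ)) h
    rw [hk]
    push_cast at hq ⊢
    linear_combination hq
  · have h := nat2choose k
    have hq : ((2 * (k+2).choose 2 : ℕ) : ℚ) = (((k+2)*(k+1) : ℕ) : ℚ) := by
      exact_mod_cast congrArg (Nat.cast (R := ℚ)) h
    push_cast at hq ⊢
    linear_combination hq
  · exact hCnQpos
  · positivity
  · have h : ((4 * (goodQuadSet G U).ncard : ℕ) : ℚ)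
        ≤ ((U.card * (goodQuadsContaining G U a).ncard : ℕ) : ℚ) := by
      exact_mod_cast hlow
    push_cast at h
    rw [hnQ] at h
    linarith
  · have h : ((goodQuadsContaining G U a).ncard : ℚ)
        ≤ (Ua.card : ℚ) * (((k+2).choose 2 : ℕ) : ℚ) + ((k:ℚ)+3) * (((T:ℤ):ℚ) - 1) := by
      exact_mod_cast hupper
    exact h
  · have hc2 := Int.ceil_lt_add_one (4 * epsU G U * ((U.card:ℚ) - 1))
    have hc3 : ((Ua.card : ℤ) : ℚ) + 1 ≤ (⌈4 * epsU G U * ((U.card:ℚ) - 1)⌉ : ℚ) := by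
      exact_mod_cast hcon
    rw [hεdef] at hc2 hc3
    rw [hnQ] at hc2 hc3
    push_cast at hc3
    have : (Ua.card : ℚ) < 4 * (((goodQuadSet G U).ncard : ℚ) /
        (8 * ((QuadSet U).ncard : ℚ))) * ((k:ℚ) + 4 - 1) := by linarith
    linarith [this]
  · have hc2 := Int.ceil_lt_add_one (4 * epsU G U * (((U.card - 2).choose 2 : ℕ) : ℚ))
    rw [hT]
    rw [hεdef, hCn2] at hc2 ⊢
    linarith [hc2]
end

section
/- In an S4 graph G, every clique is shattered by the family of halfspaces; consequently the VC dimension of the set of convex bipartitions (halfspaces) of G is at least the clique number ω(G). -/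
open SimpleGraph

def IsConvex {V : Type*} (G : SimpleGraph V) (C : Set V) : Prop :=
  ∀ u ∈ C, ∀ v ∈ C, interval G u v ⊆ C

/-- The geodesic convex hull. -/
def gconvexHull {V : Type*} (G : SimpleGraph V) (A : Set V) : Set V :=
  ⋂₀ {C | IsConvex G C ∧ A ⊆ C}

/-- A halfspace: a convex set with convex complement. -/
def IsHalfspace {V : Type*} (G : SimpleGraph V) (H : Set V) : Prop :=
  IsConvex G H ∧ IsConvex G Hᶜ

/-- The separation axiom `S4`: sets with disjoint convex hulls can be separated
by a halfspace. -/
def S4 {V : Type*} (G : SimpleGraph V) : Prop :=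
  ∀ A B : Set V, gconvexHull G A ∩ gconvexHull G B = ∅ →
    ∃ H : Set V, IsHalfspace G H ∧ A ⊆ H ∧ B ⊆ Hᶜ

lemma clique_convex {V : Type*} (G : SimpleGraph V)
    (hG : G.Connected) {A : Set V} (hA : G.IsClique A) : IsConvex G A := by
  intro u hu v hv x hx
  simp only [interval, Set.mem_setOf_eq] at hx
  by_cases huv : u = v
  · subst huv
    have h0 : G.dist u u = 0 := by simp
    rw [h0] at hx
    have hux : G.dist u x = 0 := by omega
    have : u = x := by
      have := hG.preconnected u x
      rwa [SimpleGraph.Reachable.dist_eq_zero_iff this] at hux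
    rwa [← this]
  · have hadj : G.Adj u v := hA hu hv huv
    have h1 : G.dist u v = 1 := SimpleGraph.dist_eq_one_iff_adj.mpr hadj
    rw [h1] at hx
    rcases Nat.le_one_iff_eq_zero_or_eq_one.mp (Nat.le.intro hx : G.dist u x ≤ 1) with h0 | _
    · have : u = x := by
        rwa [SimpleGraph.Reachable.dist_eq_zero_iff (hG.preconnected u x)] at h0
      rwa [← this]
    · have hxv : G.dist x v = 0 := by omega
      have : x = v := by
        rwa [SimpleGraph.Reachable.dist_eq_zero_iff (hG.preconnected x v)] at hxv
      rwa [this]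

lemma hull_of_convex {V : Type*} (G : SimpleGraph V) {A : Set V}
    (h : IsConvex G A) : gconvexHull G A = A := by
  apply Set.Subset.antisymm
  · exact Set.sInter_subset_of_mem ⟨h, Set.Subset.rfl⟩
  · intro x hx C hC
    exact hC.2 hx

/-- in an `S4` graph every clique is shattered by the halfspaces;
consequently, for every `n` such that `G` has an `n`-clique (in particular
`n = ω(G)`), there is a set of `n` vertices shattered by the halfspaces, so the
VC dimension of the convex bipartitions is at least `ω(G)`. -/
theorem stmt7 {V : Type*} [Fintype V] [DecidableEq V] (G : SimpleGraph V)
    (hG : G.Connected) (hS4 : S4 G) :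
    (∀ S : Finset V, G.IsClique (S : Set V) → ∀ T ⊆ S,
      ∃ H : Set V, IsHalfspace G H ∧ (S : Set V) ∩ H = (T : Set V)) ∧
    (∀ n : ℕ, (∃ S : Finset V, G.IsNClique n S) →
      ∃ S : Finset V, S.card = n ∧ ∀ T ⊆ S,
        ∃ H : Set V, IsHalfspace G H ∧ (S : Set V) ∩ H = (T : Set V)) := by
  have main : ∀ S : Finset V, G.IsClique (S : Set V) → ∀ T ⊆ S,
      ∃ H : Set V, IsHalfspace G H ∧ (S : Set V) ∩ H = (T : Set V) := by
    intro S hS T hTS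
    have hT : G.IsClique ((T : Set V)) := hS.subset (by exact_mod_cast hTS)
    have hST : G.IsClique (((S \ T : Finset V) : Set V)) := by
      apply hS.subset
      intro x hx
      simp only [Finset.coe_sdiff, Set.mem_diff] at hx
      exact hx.1
    have hdisj : gconvexHull G (T : Set V) ∩ gconvexHull G ((S \ T : Finset V) : Set V) = ∅ := by
      rw [hull_of_convex G (clique_convex G hG hT),
        hull_of_convex G (clique_convex G hG hST)]
      ext x
      simp only [Finset.coe_sdiff, Set.mem_inter_iff, Set.mem_diff, Set.mem_empty_iff_false,
        iff_false, not_and]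
      tauto
    obtain ⟨H, hH, hTH, hSTH⟩ := hS4 _ _ hdisj
    refine ⟨H, hH, ?_⟩
    ext x
    simp only [Set.mem_inter_iff, Finset.mem_coe]
    constructor
    · rintro ⟨hxS, hxH⟩
      by_contra hxT
      have : x ∈ ((S \ T : Finset V) : Set V) := by
        simp [Finset.mem_sdiff, hxS, hxT]
      exact hSTH this hxH
    · intro hxT
      exact ⟨Finset.mem_coe.mpr (hTS hxT), hTH hxT⟩
  refine ⟨main, ?_⟩
  rintro n ⟨S, hS⟩
  exact ⟨S, hS.card_eq, main S hS.isClique⟩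
end

section
/- Let G be a connected bipartite graph with a convex bipartition y into classes C_0 and C_1, and let {u,v} be a cut-edge with y(u)=0, y(v)=1. Then for every vertex x, y(x) = 0 if d(x,u) < d(x,v) and y(x) = 1 if d(x,v) < d(x,u); moreover, since G is bipartite, d(x,u) ≠ d(x,v) for all x, so the labels of all vertices are determined by the single cut-edge. -/
open SimpleGraph

private lemma fin2_aux : ∀ x y z : Fin 2, x ≠ y → (x = z ↔ ¬ y = z) := by decide

private lemma walk_parity {V : Type*} {G : SimpleGraph V} (c : G.Coloring (Fin 2))
    {a b : V} (p : G.Walk a b) : Even p.length ↔ c a = c b := by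
  induction p with
  | nil => simp
  | cons h p ih =>
    rw [Walk.length_cons, Nat.even_add_one, ih, fin2_aux _ _ _ (c.valid h)]

/-- in a connected bipartite graph with a convex bipartition `y`
and a cut-edge `{u,v}` with `y u = 0`, `y v = 1`, every vertex `x` satisfies
`d(x,u) ≠ d(x,v)`, and its label is determined by which of the two distances is
smaller. -/
theorem stmt10 {V : Type*} [Fintype V] (G : SimpleGraph V) (hG : G.Connected)
    (hbip : G.Colorable 2) (y : V → Fin 2)
    (h0 : IsConvex G (y ⁻¹' {0})) (h1 : IsConvex G (y ⁻¹' {1}))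
    (u v : V) (huv : G.Adj u v) (hu : y u = 0) (hv : y v = 1) :
    ∀ x : V,
      G.dist x u ≠ G.dist x v ∧
      (G.dist x u < G.dist x v → y x = 0) ∧
      (G.dist x v < G.dist x u → y x = 1) := by
  intro x
  obtain ⟨c⟩ := hbip
  have hduv : G.dist u v = 1 := dist_eq_one_iff_adj.mpr huv
  -- parity
  obtain ⟨p, hp⟩ := hG.exists_walk_length_eq_dist x u
  obtain ⟨q, hq⟩ := hG.exists_walk_length_eq_dist x v
  have hcuv : c u ≠ c v := c.valid huv
  have hne : G.dist x u ≠ G.dist x v := by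
    intro h
    have h1 : Even p.length ↔ c x = c u := walk_parity c p
    have h2 : Even q.length ↔ c x = c v := walk_parity c q
    rw [hp] at h1; rw [hq] at h2; rw [h] at h1
    have := h1.symm.trans h2
    revert hcuv this
    generalize c x = a; generalize c u = b; generalize c v = d
    fin_cases a <;> fin_cases b <;> fin_cases d <;> simp
  refine ⟨hne, ?_, ?_⟩
  · intro hlt
    have h3 : G.dist x u + G.dist u v = G.dist x v := by
      have ht := hG.dist_triangle (u := x) (v := u) (w := v)
      omega
    by_contra hx
    have hx1 : y x = 1 := by omega
    have : u ∈ interval G x v := h3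
    have := h1 x hx1 v (by simpa using hv) this
    simp only [Set.mem_preimage, Set.mem_singleton_iff] at this
    rw [hu] at this
    exact absurd this (by decide)
  · intro hlt
    have h3 : G.dist x v + G.dist v u = G.dist x u := by
      have ht := hG.dist_triangle (u := x) (v := v) (w := u)
      have : G.dist v u = 1 := by rw [SimpleGraph.dist_comm]; exact hduv
      omega
    by_contra hx
    have hx0 : y x = 0 := by omega
    have : v ∈ interval G x u := h3
    have := h0 x (by simpa using hx0) u (by simpa using hu) this
    simp only [Set.mem_preimage, Set.mem_singleton_iff] at this
    rw [hv] at this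
    exact absurd this (by decide)
end

section
/- For any graph G on n vertices and any integer c < n, there exists a labeling y of the vertices such that the merging degree δ(G) under y is at most 2c, yet any self-directed learning algorithm makes at least c mistakes in the worst case. -/
open SimpleGraph

/-- A deterministic self-directed learner: from the history of revealed
(vertex, label) pairs it selects the next vertex to query and predicts a label
for it. -/
structure Learner (V L : Type*) where
  query : List (V × L) → V
  predict : List (V × L) → L

/-- The history of revealed (vertex, label) pairs after `t` rounds against the
true labeling `y`. -/
def Learner.history {V L : Type*} (A : Learner V L) (y : V → L) : ℕ → List (V × L)
  | 0 => []
  | t + 1 =>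
      (A.query (A.history y t), y (A.query (A.history y t))) :: A.history y t

/-- The number of prediction mistakes of `A` against `y` in the first `n` rounds. -/
def Learner.mistakes {V L : Type*} [DecidableEq L] (A : Learner V L) (y : V → L)
    (n : ℕ) : ℕ :=
  ((Finset.range n).filter fun t =>
    A.predict (A.history y t) ≠ y (A.query (A.history y t))).card

/-- `A` queries every vertex within the first `|V|` rounds (the self-directed
protocol requires every vertex to be selected exactly once). -/
def Learner.Covers {V L : Type*} [Fintype V] (A : Learner V L) : Prop :=
  ∀ (y : V → L) (v : V), ∃ t < Fintype.card V, A.query (A.history y t) = v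

/-- The graph on `V` whose edges are the edges of `G` joining equally labeled
vertices; its connected components are the maximal connected uniformly labeled
clusters. -/
def sameLabelGraph {V L : Type*} (G : SimpleGraph V) (y : V → L) : SimpleGraph V where
  Adj u v := G.Adj u v ∧ y u = y v
  symm := by
    constructor
    intro u v h
    exact ⟨h.1.symm, h.2.symm⟩
  loopless := by
    constructor
    intro v h
    exact (G.ne_of_adj h.1) rfl

/-- The inner border of a cluster `C`: its vertices adjacent to vertices outside `C`. -/
def innerBorder {V : Type*} (G : SimpleGraph V) (C : Set V) : Set V :=
  {v ∈ C | ∃ u, u ∉ C ∧ G.Adj v u}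

/-- The outer border of a cluster `C`: vertices outside `C` adjacent to the inner
border of `C`. -/
def outerBorder {V : Type*} (G : SimpleGraph V) (C : Set V) : Set V :=
  {u | u ∉ C ∧ ∃ v ∈ innerBorder G C, G.Adj u v}

/-- The merging degree of `G` under labeling `y`: the sum over all maximal
connected uniformly labeled clusters `C` of `min(|inner border|, |outer border|)`. -/
noncomputable def mergingDegree {V L : Type*} (G : SimpleGraph V) (y : V → L) : ℕ :=
  ∑ᶠ c : (sameLabelGraph G y).ConnectedComponent,
    min ((innerBorder G c.supp).ncard) ((outerBorder G c.supp).ncard)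


open Classical in
noncomputable def findLbl {V : Type*} (v : V) : List (V × Fin 2) → Option (Fin 2)
  | [] => none
  | (a, l) :: h => if v = a then some l else findLbl v h

open Classical in
noncomputable def stepLbl {V : Type*} (A : Learner V (Fin 2)) (F : Finset V)
    (h : List (V × Fin 2)) : Fin 2 :=
  (findLbl (A.query h) h).getD (if A.query h ∈ F then 1 - A.predict h else 0)

noncomputable def advRun {V : Type*} (A : Learner V (Fin 2)) (F : Finset V) :
    ℕ → List (V × Fin 2)
  | 0 => []
  | t + 1 => (A.query (advRun A F t), stepLbl A F (advRun A F t)) :: advRun A F t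

lemma findLbl_mem {V : Type*} {v : V} {l : Fin 2} :
    ∀ {h : List (V × Fin 2)}, findLbl v h = some l → (v, l) ∈ h := by
  intro h
  induction h with
  | nil => intro hh; simp [findLbl] at hh
  | cons a h ih =>
    obtain ⟨a, la⟩ := a
    intro hh
    rw [findLbl] at hh
    split at hh
    · rename_i he; cases hh; subst he; simp
    · exact List.mem_cons_of_mem _ (ih hh)

lemma advRun_consistent {V : Type*} {A : Learner V (Fin 2)} {F : Finset V} :
    ∀ {t : ℕ} {v : V} {l : Fin 2}, (v, l) ∈ advRun A F t →
      findLbl v (advRun A F t) = some l := by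
  intro t
  induction t with
  | zero => intro v l hm; simp [advRun] at hm
  | succ t ih =>
    intro v l hm
    rw [advRun] at hm ⊢
    rw [findLbl]
    by_cases hv : v = A.query (advRun A F t)
    · rw [if_pos hv]
      rcases List.mem_cons.mp hm with he | hmem
      · cases he; rfl
      · subst hv
        have := ih hmem
        simp [stepLbl, this]
    · rw [if_neg hv]
      rcases List.mem_cons.mp hm with he | hmem
      · cases he; exact absurd rfl hv
      · exact ih hmem

lemma advRun_mono {V : Type*} {A : Learner V (Fin 2)} {F : Finset V}
    {t : ℕ} {v : V} {l : Fin 2} (hm : (v, l) ∈ advRun A F t) :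
    ∀ {s : ℕ}, t ≤ s → (v, l) ∈ advRun A F s := by
  intro s
  induction s with
  | zero => intro hs; interval_cases t; exact hm
  | succ s ih =>
    intro hs
    rcases Nat.le_succ_iff.mp hs with h | h
    · exact List.mem_cons_of_mem _ (ih h)
    · subst h; exact hm

lemma advRun_query {V : Type*} {A : Learner V (Fin 2)} {F : Finset V} :
    ∀ {t : ℕ} {v : V} {l : Fin 2}, (v, l) ∈ advRun A F t →
      ∃ s < t, A.query (advRun A F s) = v := by
  intro t
  induction t with
  | zero => intro v l hm; simp [advRun] at hm
  | succ t ih =>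
    intro v l hm
    rw [advRun] at hm
    rcases List.mem_cons.mp hm with he | hmem
    · cases he; exact ⟨t, Nat.lt_succ_self t, rfl⟩
    · obtain ⟨s, hs, hq⟩ := ih hmem
      exact ⟨s, Nat.lt_succ_of_lt hs, hq⟩

lemma advRun_zero_of_not_mem {V : Type*} {A : Learner V (Fin 2)} {F : Finset V} :
    ∀ {t : ℕ} {v : V} {l : Fin 2}, (v, l) ∈ advRun A F t → v ∉ F → l = 0 := by
  intro t
  induction t with
  | zero => intro v l hm; simp [advRun] at hm
  | succ t ih =>
    intro v l hm hv
    rw [advRun] at hm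
    rcases List.mem_cons.mp hm with he | hmem
    · cases he
      rw [stepLbl]
      cases hf : findLbl (A.query (advRun A F t)) (advRun A F t) with
      | none => simp [hf, if_neg hv]
      | some l' => simp only [hf, Option.getD_some]; exact ih (findLbl_mem hf) hv
    · exact ih hmem hv

def ConnOn {V : Type*} (G : SimpleGraph V) (S : Set V) : Prop :=
  ∀ u ∈ S, ∀ v ∈ S, ∃ p : G.Walk u v, ∀ x ∈ p.support, x ∈ S

lemma walk_cross {V : Type*} {G : SimpleGraph V} {S : Set V} :
    ∀ {u w : V}, G.Walk u w → u ∈ S → w ∉ S →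
      ∃ a ∈ S, ∃ b, b ∉ S ∧ G.Adj a b := by
  intro u w p
  induction p with
  | nil => intro h h'; exact absurd h h'
  | @cons u x w h p ih =>
    intro hu hw
    by_cases hx : x ∈ S
    · exact ih hx hw
    · exact ⟨u, hu, x, hx, h⟩

lemma exists_conn_finset {V : Type*} [Fintype V] {G : SimpleGraph V}
    (hG : G.Connected) : ∀ k, 1 ≤ k → k ≤ Fintype.card V →
      ∃ S : Finset V, S.card = k ∧ ConnOn G ↑S := by
  intro k
  induction k with
  | zero => intro h; omega
  | succ k ih =>
    intro _ hk
    rcases Nat.eq_zero_or_pos k with rfl | hk1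
    · obtain ⟨v⟩ := hG.nonempty
      refine ⟨{v}, Finset.card_singleton v, ?_⟩
      intro u hu w hw
      simp only [Finset.coe_singleton, Set.mem_singleton_iff] at hu hw
      subst hu; subst hw
      exact ⟨Walk.nil, by simp⟩
    · obtain ⟨S, hcard, hconn⟩ := ih hk1 (Nat.le_of_succ_le hk)
      have hne : S.Nonempty := Finset.card_pos.mp (by omega)
      obtain ⟨u₀, hu₀⟩ := hne
      have hSne : ∃ w, w ∉ S := by
        by_contra h; push_neg at h
        have : S = Finset.univ := Finset.eq_univ_iff_forall.mpr h
        rw [this, Finset.card_univ] at hcard; omega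
      obtain ⟨w, hw⟩ := hSne
      obtain ⟨p⟩ := hG.preconnected u₀ w
      obtain ⟨a, ha, b, hb, hab⟩ := walk_cross (S := (↑S : Set V)) p
        (Finset.mem_coe.mpr hu₀) (by simpa using hw)
      have ha' : a ∈ S := Finset.mem_coe.mp ha
      have hb' : b ∉ S := fun h => hb (Finset.mem_coe.mpr h)
      classical
      refine ⟨insert b S, ?_, ?_⟩
      · rw [Finset.card_insert_of_notMem hb', hcard]
      · have hmem : ∀ x : V, x ∈ (↑(insert b S) : Set V) ↔ x = b ∨ x ∈ S := by
          intro x; simp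
        have key : ∀ x ∈ (↑(insert b S) : Set V), ∃ p : G.Walk x a,
            ∀ z ∈ p.support, z ∈ (↑(insert b S) : Set V) := by
          intro x hx
          rcases (hmem x).mp hx with rfl | hxS
          · refine ⟨Walk.cons hab.symm Walk.nil, ?_⟩
            intro z hz
            rw [Walk.support_cons] at hz
            rcases List.mem_cons.mp hz with rfl | hz
            · exact (hmem z).mpr (Or.inl rfl)
            · simp at hz; rw [hz]; exact (hmem a).mpr (Or.inr ha')
          · obtain ⟨p, hp⟩ := hconn x (Finset.mem_coe.mpr hxS) a ha
            exact ⟨p, fun z hz => (hmem z).mpr (Or.inr (Finset.mem_coe.mp (hp z hz)))⟩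
        intro x hx y hy
        obtain ⟨p1, hp1⟩ := key x hx
        obtain ⟨p2, hp2⟩ := key y hy
        refine ⟨p1.append p2.reverse, ?_⟩
        intro z hz
        rcases (Walk.mem_support_append_iff _ _).mp hz with h | h
        · exact hp1 z h
        · rw [Walk.support_reverse, List.mem_reverse] at h
          exact hp2 z h

lemma walk_reach_same {V L : Type*} {G : SimpleGraph V} {y : V → L} {S : Set V} {l : L}
    (hS : ∀ v ∈ S, y v = l) :
    ∀ {u v : V} (p : G.Walk u v), (∀ x ∈ p.support, x ∈ S) →
      (sameLabelGraph G y).Reachable u v := by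
  intro u v p
  induction p with
  | nil => intro _; exact Reachable.refl _
  | @cons u x v h p ih =>
    intro hsup
    have hu : u ∈ S := hsup u (by simp)
    have hx : x ∈ S := hsup x (by simp [Walk.support_cons])
    have hadj : (sameLabelGraph G y).Adj u x := ⟨h, by rw [hS u hu, hS x hx]⟩
    exact hadj.reachable.trans (ih fun z hz => hsup z (by simp [Walk.support_cons, hz]))


/-- for every connected graph `G` on `n` vertices, every `c < n`
and every self-directed learner, there is a labeling with merging degree at most
`2c` forcing at least `c` mistakes. -/
theorem stmt12 {V : Type*} [Fintype V] (G : SimpleGraph V) (hG : G.Connected)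
    (c : ℕ) (hc : c < Fintype.card V)
    (A : Learner V (Fin 2)) (hA : A.Covers) :
    ∃ y : V → Fin 2,
      mergingDegree G y ≤ 2 * c ∧ c ≤ A.mistakes y (Fintype.card V) := by
  classical
  set N := Fintype.card V with hN
  obtain ⟨S, hScard, hSconn⟩ := exists_conn_finset hG (N - c) (by omega) (by omega)
  set F := Sᶜ with hF
  have hFcard : F.card = c := by
    rw [hF, Finset.card_compl, hScard]; omega
  set y : V → Fin 2 := fun v => (findLbl v (advRun A F N)).getD 0 with hy
  have hyS : ∀ v ∈ S, y v = 0 := by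
    intro v hv
    have hvF : v ∉ F := by simp [hF, hv]
    simp only [hy]
    cases hfl : findLbl v (advRun A F N) with
    | none => rfl
    | some l =>
      simp only [Option.getD_some]
      exact advRun_zero_of_not_mem (findLbl_mem hfl) hvF
  have hy_mem : ∀ t ≤ N, ∀ v l, (v, l) ∈ advRun A F t → y v = l := by
    intro t ht v l hm
    have h := advRun_consistent (advRun_mono hm ht)
    simp only [hy, h, Option.getD_some]
  have hist : ∀ t ≤ N, A.history y t = advRun A F t := by
    intro t
    induction t with
    | zero => intro _; rfl
    | succ t ih =>
      intro ht
      have ih' := ih (Nat.le_of_succ_le ht)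
      rw [Learner.history, ih', advRun]
      have : y (A.query (advRun A F t)) = stepLbl A F (advRun A F t) :=
        hy_mem (t+1) ht _ _ (by rw [advRun]; exact List.mem_cons_self)
      rw [this]
  refine ⟨y, ?_, ?_⟩
  · -- merging degree bound
    set H := sameLabelGraph G y with hH
    have hSne : S.Nonempty := Finset.card_pos.mp (by omega)
    obtain ⟨u₀, hu₀⟩ := hSne
    set C₀ := H.connectedComponentMk u₀ with hC₀
    have hSsub : (↑S : Set V) ⊆ C₀.supp := by
      intro v hv
      have hreach : H.Reachable v u₀ := by
        obtain ⟨p, hp⟩ := hSconn v hv u₀ (Finset.mem_coe.mpr hu₀)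
        exact walk_reach_same (l := (0 : Fin 2))
          (fun x hx => hyS x (Finset.mem_coe.mp hx)) p hp
      rw [ConnectedComponent.mem_supp_iff]
      exact ConnectedComponent.sound hreach
    have hmemF : ∀ v : V, v ∉ (↑F : Set V) → v ∈ S := by
      intro v hv
      by_contra h
      exact hv (by simp [hF, Finset.mem_compl, h])
    have hsupF : ∀ C : H.ConnectedComponent, C ≠ C₀ → C.supp ⊆ (↑F : Set V) := by
      intro C hC v hv
      by_contra hvF
      have hvS : v ∈ S := hmemF v hvF
      rw [ConnectedComponent.mem_supp_iff] at hv
      have h2 : H.connectedComponentMk v = C₀ := by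
        have := hSsub (Finset.mem_coe.mpr hvS)
        rwa [ConnectedComponent.mem_supp_iff] at this
      exact hC (hv.symm.trans h2)
    have hfC₀ : min ((innerBorder G C₀.supp).ncard) ((outerBorder G C₀.supp).ncard) ≤ c := by
      have hsub : outerBorder G C₀.supp ⊆ (↑F : Set V) := by
        intro u hu
        by_contra h
        exact hu.1 (hSsub (Finset.mem_coe.mpr (hmemF u h)))
      calc min ((innerBorder G C₀.supp).ncard) ((outerBorder G C₀.supp).ncard)
          ≤ (outerBorder G C₀.supp).ncard := min_le_right _ _
        _ ≤ (↑F : Set V).ncard := Set.ncard_le_ncard hsub (Set.toFinite _)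
        _ = F.card := Set.ncard_coe_finset F
        _ = c := hFcard
    haveI : Fintype H.ConnectedComponent := Fintype.ofFinite _
    rw [mergingDegree]
    rw [finsum_eq_sum_of_fintype]
    rw [← Finset.add_sum_erase Finset.univ _ (Finset.mem_univ C₀)]
    have hrest : ∑ C ∈ Finset.univ.erase C₀,
        min ((innerBorder G C.supp).ncard) ((outerBorder G C.supp).ncard) ≤ c := by
      have hdisj : ∀ C ∈ Finset.univ.erase C₀, ∀ D ∈ Finset.univ.erase C₀, C ≠ D →
          Disjoint ((Set.toFinite C.supp).toFinset) ((Set.toFinite D.supp).toFinset) := by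
        intro C _ D _ hCD
        rw [Finset.disjoint_left]
        intro x hx hx'
        rw [Set.Finite.mem_toFinset, ConnectedComponent.mem_supp_iff] at hx hx'
        exact hCD (hx.symm.trans hx')
      calc ∑ C ∈ Finset.univ.erase C₀,
            min ((innerBorder G C.supp).ncard) ((outerBorder G C.supp).ncard)
          ≤ ∑ C ∈ Finset.univ.erase C₀, ((Set.toFinite C.supp).toFinset).card := by
            apply Finset.sum_le_sum
            intro C _
            calc min ((innerBorder G C.supp).ncard) ((outerBorder G C.supp).ncard)
                ≤ (innerBorder G C.supp).ncard := min_le_left _ _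
              _ ≤ C.supp.ncard := Set.ncard_le_ncard (fun v hv => hv.1) (Set.toFinite _)
              _ = ((Set.toFinite C.supp).toFinset).card :=
                  Set.ncard_eq_toFinset_card _ _
        _ = ((Finset.univ.erase C₀).biUnion
              fun C => (Set.toFinite C.supp).toFinset).card :=
            (Finset.card_biUnion hdisj).symm
        _ ≤ F.card := by
            apply Finset.card_le_card
            intro x hx
            rw [Finset.mem_biUnion] at hx
            obtain ⟨C, hC, hxC⟩ := hx
            rw [Set.Finite.mem_toFinset] at hxC
            exact hsupF C (Finset.ne_of_mem_erase hC) hxC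
        _ = c := hFcard
    omega
  · -- mistakes bound
    have hex : ∀ v : V, ∃ t, A.query (A.history y t) = v := by
      intro v; obtain ⟨t, _, h⟩ := hA y v; exact ⟨t, h⟩
    set tq : V → ℕ := fun v => Nat.find (hex v) with htq
    have htq_spec : ∀ v, A.query (A.history y (tq v)) = v := fun v => Nat.find_spec (hex v)
    have htq_lt : ∀ v, tq v < N := by
      intro v; obtain ⟨t, ht, h⟩ := hA y v
      exact lt_of_le_of_lt (Nat.find_min' _ h) ht
    have hmistake : ∀ v ∈ F,
        A.predict (A.history y (tq v)) ≠ y (A.query (A.history y (tq v))) := by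
      intro v hv
      have ht := htq_lt v
      have hhist : A.history y (tq v) = advRun A F (tq v) := hist _ (le_of_lt ht)
      have hq : A.query (advRun A F (tq v)) = v := by rw [← hhist]; exact htq_spec v
      have hnone : findLbl v (advRun A F (tq v)) = none := by
        cases hfl : findLbl v (advRun A F (tq v)) with
        | none => rfl
        | some l =>
          obtain ⟨s, hs, hqs⟩ := advRun_query (findLbl_mem hfl)
          have hhs : A.history y s = advRun A F s := hist s (by omega)
          exact absurd (by rw [hhs, hqs] : A.query (A.history y s) = v)
            (Nat.find_min (hex v) hs)
      have hstep : stepLbl A F (advRun A F (tq v)) = 1 - A.predict (advRun A F (tq v)) := by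
        simp only [stepLbl, hq, hnone, Option.getD_none, if_pos hv]
      have hyv : y v = 1 - A.predict (advRun A F (tq v)) := by
        apply hy_mem (tq v + 1) (by omega)
        rw [advRun, hq, hstep]
        exact List.mem_cons_self
      rw [hhist, hq, hyv]
      intro h
      have hne : ∀ x : Fin 2, x ≠ 1 - x := by decide
      exact hne _ h
    unfold Learner.mistakes
    rw [← hFcard]
    apply Finset.card_le_card_of_injOn tq
    · intro v hv
      rw [Finset.mem_coe, Finset.mem_filter]
      exact ⟨Finset.mem_range.mpr (htq_lt v), hmistake v hv⟩
    · intro v hv w hw h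
      rw [← htq_spec v, ← htq_spec w, h]
end

section
/- For any grid graph G (Cartesian product of two paths) and any partition of its vertices into k geodesically convex clusters, if the labeling is chosen by assigning the k labels to the k clusters uniformly at random among all k! bijections, then any self-directed learning algorithm makes in expectation at least k − H_k mistakes, where H_k = ∑_{j=1}^k 1/j; moreover k − H_k ≥ k/4 for all k ≥ 2. -/
open SimpleGraph

namespace S13

variable {V : Type*} {k : ℕ}

def yl (P : V → Fin k) (π : Equiv.Perm (Fin k)) : V → Fin k := fun v => π (P v)

def vq (A : Learner V (Fin k)) (y : V → Fin k) (t : ℕ) : V :=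
  A.query (A.history y t)

def Cs (A : Learner V (Fin k)) (P : V → Fin k) (y : V → Fin k) (t : ℕ) : Finset (Fin k) :=
  (Finset.range t).image fun s => P (vq A y s)

lemma hist_agree (A : Learner V (Fin k)) (y y' : V → Fin k) (t : ℕ)
    (h : ∀ s, s < t → y' (vq A y s) = y (vq A y s)) :
    A.history y' t = A.history y t := by
  induction t with
  | zero => rfl
  | succ t ih =>
    have ih' := ih fun s hs => h s (hs.trans t.lt_succ_self)
    have ht := h t t.lt_succ_self
    simp only [Learner.history, ih']
    rw [show y' (A.query (A.history y t)) = y (A.query (A.history y t)) from ht]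

lemma Cs_succ (A : Learner V (Fin k)) (P : V → Fin k) (y : V → Fin k) (t : ℕ) :
    Cs A P y (t + 1) = insert (P (vq A y t)) (Cs A P y t) := by
  simp [Cs, Finset.range_add_one]

lemma Cs_mono (A : Learner V (Fin k)) (P : V → Fin k) (y : V → Fin k) {s t : ℕ} (h : s ≤ t) :
    Cs A P y s ⊆ Cs A P y t :=
  Finset.image_subset_image (by simpa using Finset.range_subset_range.2 h)

lemma disc_unique (A : Learner V (Fin k)) (P : V → Fin k) (y : V → Fin k) {t1 t2 : ℕ}
    (h1 : P (vq A y t1) ∉ Cs A P y t1) (h2 : P (vq A y t2) ∉ Cs A P y t2)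
    (hc : (Cs A P y t1).card = (Cs A P y t2).card) : t1 = t2 := by
  by_contra hne
  wlog hlt : t1 < t2 generalizing t1 t2
  · exact this h2 h1 hc.symm (Ne.symm hne) (by omega)
  have h3 : (Cs A P y (t1 + 1)).card = (Cs A P y t1).card + 1 := by
    rw [Cs_succ, Finset.card_insert_of_notMem h1]
  have h4 : (Cs A P y (t1 + 1)).card ≤ (Cs A P y t2).card :=
    Finset.card_le_card (Cs_mono A P y hlt)
  omega

lemma card_disc (A : Learner V (Fin k)) (P : V → Fin k) (y : V → Fin k) (n : ℕ) :
    ((Finset.range n).filter fun t => P (vq A y t) ∉ Cs A P y t).card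
      = (Cs A P y n).card := by
  classical
  induction n with
  | zero => simp [Cs]
  | succ n ih =>
    rw [Finset.range_add_one, Finset.filter_insert, Cs_succ]
    by_cases h : P (vq A y n) ∉ Cs A P y n
    · rw [if_pos h, Finset.card_insert_of_notMem (by simp),
        Finset.card_insert_of_notMem h, ih]
    · rw [if_neg h, Finset.card_insert_of_mem (not_not.mp h), ih]


def Pred (A : Learner V (Fin k)) (P : V → Fin k) (N i : ℕ) (π : Equiv.Perm (Fin k)) : Prop :=
  ∃ t, t < N ∧ P (vq A (yl P π) t) ∉ Cs A P (yl P π) t ∧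
    (Cs A P (yl P π) t).card = i ∧
    A.predict (A.history (yl P π) t) = yl P π (vq A (yl P π) t)

lemma swap_facts (A : Learner V (Fin k)) (P : V → Fin k) (π : Equiv.Perm (Fin k)) (t : ℕ)
    (ℓ : Fin k)
    (hd : P (vq A (yl P π) t) ∉ Cs A P (yl P π) t)
    (hl : ℓ ∉ (Cs A P (yl P π) t).image π) :
    ∀ s ≤ t,
      A.history (yl P (Equiv.swap (π (P (vq A (yl P π) t))) ℓ * π)) s
        = A.history (yl P π) s := by
  intro s hs
  apply hist_agree
  intro s' hs'
  have hmem : P (vq A (yl P π) s') ∈ Cs A P (yl P π) t :=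
    Finset.mem_image_of_mem _ (Finset.mem_range.2 (lt_of_lt_of_le hs' hs))
  have h1 : π (P (vq A (yl P π) s')) ∈ (Cs A P (yl P π) t).image π :=
    Finset.mem_image_of_mem _ hmem
  have hq : π (P (vq A (yl P π) t)) ∉ (Cs A P (yl P π) t).image π := by
    intro hmem'
    obtain ⟨c', hc', hcc⟩ := Finset.mem_image.1 hmem'
    exact hd (by rwa [π.injective hcc] at hc')
  show Equiv.swap (π (P (vq A (yl P π) t))) ℓ (π (P (vq A (yl P π) s')))
      = yl P π (vq A (yl P π) s')
  rw [Equiv.swap_apply_of_ne_of_ne (by rintro h; rw [h] at h1; exact hq h1)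
    (by rintro h; rw [h] at h1; exact hl h1)]
  rfl


open scoped Classical in
lemma key_card (A : Learner V (Fin k)) (P : V → Fin k) (N i : ℕ) (hik : i < k) :
    (k - i) * (Finset.univ.filter (Pred A P N i)).card ≤ Nat.factorial k := by
  classical
  set Good := Finset.univ.filter (Pred A P N i) with hGood
  set T : Equiv.Perm (Fin k) → ℕ := fun π => sInf {t | t < N ∧
    P (vq A (yl P π) t) ∉ Cs A P (yl P π) t ∧ (Cs A P (yl P π) t).card = i ∧
    A.predict (A.history (yl P π) t) = yl P π (vq A (yl P π) t)} with hT
  have hTspec : ∀ π ∈ Good, T π < N ∧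
      P (vq A (yl P π) (T π)) ∉ Cs A P (yl P π) (T π) ∧
      (Cs A P (yl P π) (T π)).card = i ∧
      A.predict (A.history (yl P π) (T π)) = yl P π (vq A (yl P π) (T π)) := by
    intro π hπ
    have hp : Pred A P N i π := (Finset.mem_filter.1 hπ).2
    exact Nat.sInf_mem hp
  set R : Equiv.Perm (Fin k) → Finset (Fin k) :=
    fun π => Finset.univ \ (Cs A P (yl P π) (T π)).image π with hR
  set J : (Σ _ : Equiv.Perm (Fin k), Fin k) → Equiv.Perm (Fin k) :=
    fun p => Equiv.swap (p.1 (P (vq A (yl P p.1) (T p.1)))) p.2 * p.1 with hJ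
  -- the facts package
  have main : ∀ p ∈ Good.sigma R,
      (∀ s ≤ T p.1, A.history (yl P (J p)) s = A.history (yl P p.1) s) ∧
      P (vq A (yl P (J p)) (T p.1)) ∉ Cs A P (yl P (J p)) (T p.1) ∧
      (Cs A P (yl P (J p)) (T p.1)).card = i ∧
      (J p) (P (vq A (yl P (J p)) (T p.1))) = p.2 ∧
      A.predict (A.history (yl P (J p)) (T p.1)) = p.1 (P (vq A (yl P p.1) (T p.1))) := by
    rintro ⟨π, ℓ⟩ hp
    obtain ⟨hπ, hℓ⟩ := Finset.mem_sigma.1 hp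
    obtain ⟨htN, hd, hcard, hcorr⟩ := hTspec π hπ
    have hℓ' : ℓ ∉ (Cs A P (yl P π) (T π)).image π := by
      have := Finset.mem_sdiff.1 hℓ
      exact this.2
    have m1 : ∀ s ≤ T π,
        A.history (yl P (J ⟨π, ℓ⟩)) s = A.history (yl P π) s :=
      swap_facts A P π (T π) ℓ hd hℓ'
    have hv : ∀ s ≤ T π, vq A (yl P (J ⟨π, ℓ⟩)) s = vq A (yl P π) s :=
      fun s hs => congrArg A.query (m1 s hs)
    have hCs : Cs A P (yl P (J ⟨π, ℓ⟩)) (T π) = Cs A P (yl P π) (T π) := by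
      apply Finset.image_congr
      intro s hs
      show P (vq A (yl P (J ⟨π, ℓ⟩)) s) = P (vq A (yl P π) s)
      rw [hv s (le_of_lt (Finset.mem_range.1 (Finset.mem_coe.1 hs)))]
    refine ⟨m1, ?_, ?_, ?_, ?_⟩
    · rw [hv (T π) le_rfl, hCs]; exact hd
    · rw [hCs]; exact hcard
    · rw [hv (T π) le_rfl]
      show Equiv.swap (π (P (vq A (yl P π) (T π)))) ℓ (π (P (vq A (yl P π) (T π)))) = ℓ
      exact Equiv.swap_apply_left _ _
    · rw [m1 (T π) le_rfl]; exact hcorr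
  -- injectivity
  have hinj : Set.InjOn J ↑(Good.sigma R) := by
    rintro ⟨π1, ℓ1⟩ h1 ⟨π2, ℓ2⟩ h2 heq
    have h1' : (⟨π1, ℓ1⟩ : Σ _ : Equiv.Perm (Fin k), Fin k) ∈ Good.sigma R :=
      Finset.mem_coe.1 h1
    have h2' : (⟨π2, ℓ2⟩ : Σ _ : Equiv.Perm (Fin k), Fin k) ∈ Good.sigma R :=
      Finset.mem_coe.1 h2
    obtain ⟨m1a, m2a, m3a, m4a, m5a⟩ := main _ h1'
    obtain ⟨m1b, m2b, m3b, m4b, m5b⟩ := main _ h2'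
    rw [← heq] at m1b m2b m3b m4b m5b
    dsimp only at m1a m2a m3a m4a m5a m1b m2b m3b m4b m5b
    have hteq : T π1 = T π2 :=
      disc_unique A P (yl P (J ⟨π1, ℓ1⟩)) m2a m2b (by rw [m3a, m3b])
    have hq : π1 (P (vq A (yl P π1) (T π1))) = π2 (P (vq A (yl P π2) (T π2))) := by
      rw [← m5a, ← m5b, hteq]
    have hl : ℓ1 = ℓ2 := by
      rw [← m4a, ← m4b, hteq]
    have hpi : π1 = π2 := by
      have := heq
      rw [hJ] at this
      simp only at this
      rw [hq, hl] at this
      exact mul_left_cancel this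
    simp [hpi, hl]
  -- cardinalities
  have hcardR : ∀ π ∈ Good, (R π).card = k - i := by
    intro π hπ
    have himg : ((Cs A P (yl P π) (T π)).image π).card = i := by
      rw [Finset.card_image_of_injective _ π.injective, (hTspec π hπ).2.2.1]
    rw [hR]
    simp only
    rw [Finset.card_sdiff_of_subset (Finset.subset_univ _), himg, Finset.card_univ, Fintype.card_fin]
  calc (k - i) * Good.card = ∑ π ∈ Good, (R π).card := by
        rw [Finset.sum_congr rfl hcardR, Finset.sum_const, smul_eq_mul, mul_comm]
    _ = (Good.sigma R).card := (Finset.card_sigma _ _).symm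
    _ ≤ (Finset.univ : Finset (Equiv.Perm (Fin k))).card :=
        Finset.card_le_card_of_injOn J (fun _ _ => Finset.mem_univ _) hinj
    _ = Nat.factorial k := by rw [Finset.card_univ, Fintype.card_perm, Fintype.card_fin]

end S13


/-- on a grid graph (box product of two paths), for any partition
into `k` nonempty geodesically convex clusters, if the `k` labels are assigned to
the clusters by a uniformly random bijection, every self-directed learner makes
at least `k − H_k` mistakes in expectation (stated as a sum over the `k!`
bijections); moreover `k − H_k ≥ k/4`. -/
theorem stmt13 (m n k : ℕ) (hm : 1 ≤ m) (hn : 1 ≤ n) (hk : 2 ≤ k)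
    (P : Fin m × Fin n → Fin k)
    (hne : ∀ i : Fin k, (P ⁻¹' {i}).Nonempty)
    (hconv : ∀ i : Fin k,
      IsConvex (SimpleGraph.boxProd (SimpleGraph.pathGraph m) (SimpleGraph.pathGraph n))
        (P ⁻¹' {i}))
    (A : Learner (Fin m × Fin n) (Fin k)) (hA : A.Covers) :
    ((k : ℝ) - ∑ j ∈ Finset.range k, (1 : ℝ) / (j + 1)) * (Nat.factorial k : ℝ) ≤
      ∑ π : Equiv.Perm (Fin k),
        (A.mistakes (fun v => π (P v)) (Fintype.card (Fin m × Fin n)) : ℝ) ∧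
    (k : ℝ) / 4 ≤ (k : ℝ) - ∑ j ∈ Finset.range k, (1 : ℝ) / (j + 1) := by
  classical
  set N := Fintype.card (Fin m × Fin n) with hN
  -- every cluster is discovered
  have hfull : ∀ π : Equiv.Perm (Fin k), S13.Cs A P (S13.yl P π) N = Finset.univ := by
    intro π
    apply Finset.eq_univ_iff_forall.2
    intro i
    obtain ⟨v, hv⟩ := hne i
    obtain ⟨t, htN, hq⟩ := hA (S13.yl P π) v
    exact Finset.mem_image.2 ⟨t, Finset.mem_range.2 htN,
      by rw [S13.vq, hq]; exact hv⟩
  have hDcard : ∀ π : Equiv.Perm (Fin k),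
      ((Finset.range N).filter fun t =>
        P (S13.vq A (S13.yl P π) t) ∉ S13.Cs A P (S13.yl P π) t).card = k := by
    intro π
    rw [S13.card_disc, hfull, Finset.card_univ, Fintype.card_fin]
  set Dc : Equiv.Perm (Fin k) → ℕ := fun π =>
    ((Finset.range N).filter fun t =>
      (P (S13.vq A (S13.yl P π) t) ∉ S13.Cs A P (S13.yl P π) t) ∧
      A.predict (A.history (S13.yl P π) t)
        = S13.yl P π (S13.vq A (S13.yl P π) t)).card with hDc
  have hsplit : ∀ π : Equiv.Perm (Fin k), k ≤ A.mistakes (S13.yl P π) N + Dc π := by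
    intro π
    simp only [hDc]
    set y := S13.yl P π with hy
    have e1 := Finset.card_filter_add_card_filter_not
      (s := (Finset.range N).filter fun t => P (S13.vq A y t) ∉ S13.Cs A P y t)
      (p := fun t => A.predict (A.history y t) = y (S13.vq A y t))
    rw [Finset.filter_filter, Finset.filter_filter, hDcard] at e1
    have e3 : ((Finset.range N).filter fun t =>
        (P (S13.vq A y t) ∉ S13.Cs A P y t) ∧
        ¬ A.predict (A.history y t) = y (S13.vq A y t)).card ≤ A.mistakes y N := by
      apply Finset.card_le_card
      intro t ht
      simp only [Learner.mistakes, Finset.mem_filter] at ht ⊢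
      exact ⟨ht.1, ht.2.2⟩
    omega
  have hDc_le : ∀ π : Equiv.Perm (Fin k),
      Dc π ≤ ((Finset.range k).filter fun i => S13.Pred A P N i π).card := by
    intro π
    simp only [hDc]
    set y := S13.yl P π with hy
    apply Finset.card_le_card_of_injOn (fun t => (S13.Cs A P y t).card)
    · intro t ht
      obtain ⟨htN, hd, hco⟩ := Finset.mem_filter.1 ht
      have hne' : S13.Cs A P y t ≠ Finset.univ := fun h => hd (h ▸ Finset.mem_univ _)
      have hlt : (S13.Cs A P y t).card < k := by
        have := Finset.card_lt_card (Finset.ssubset_univ_iff.2 hne')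
        rwa [Finset.card_univ, Fintype.card_fin] at this
      exact Finset.mem_filter.2 ⟨Finset.mem_range.2 hlt,
        ⟨t, Finset.mem_range.1 htN, hd, rfl, hco⟩⟩
    · intro t1 h1 t2 h2 hcc
      have h1' := Finset.mem_filter.1 (Finset.mem_coe.1 h1)
      have h2' := Finset.mem_filter.1 (Finset.mem_coe.1 h2)
      exact S13.disc_unique A P y h1'.2.1 h2'.2.1 hcc
  have hswap : ∑ π : Equiv.Perm (Fin k), Dc π ≤
      ∑ i ∈ Finset.range k, (Finset.univ.filter (S13.Pred A P N i)).card := by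
    calc ∑ π : Equiv.Perm (Fin k), Dc π
        ≤ ∑ π : Equiv.Perm (Fin k),
            ((Finset.range k).filter fun i => S13.Pred A P N i π).card :=
          Finset.sum_le_sum fun π _ => hDc_le π
      _ = ∑ π : Equiv.Perm (Fin k), ∑ i ∈ Finset.range k,
            (if S13.Pred A P N i π then 1 else 0) := by
          refine Finset.sum_congr rfl fun π _ => ?_
          rw [Finset.card_filter]
      _ = ∑ i ∈ Finset.range k, ∑ π : Equiv.Perm (Fin k),
            (if S13.Pred A P N i π then 1 else 0) := Finset.sum_comm
      _ = ∑ i ∈ Finset.range k, (Finset.univ.filter (S13.Pred A P N i)).card := by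
          refine Finset.sum_congr rfl fun i _ => ?_
          rw [Finset.card_filter]
  -- pass to the reals
  have hQ : ∀ i ∈ Finset.range k,
      ((Finset.univ.filter (S13.Pred A P N i)).card : ℝ)
        ≤ (Nat.factorial k : ℝ) / ((k : ℝ) - i) := by
    intro i hi
    have hik := Finset.mem_range.1 hi
    have hkey := S13.key_card A P N i hik
    have hpos : (0 : ℝ) < (k : ℝ) - i := by
      have : (i : ℝ) + 1 ≤ (k : ℝ) := by exact_mod_cast hik
      linarith
    rw [le_div_iff₀ hpos]
    have hcast := (Nat.cast_le (α := ℝ)).2 hkey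
    push_cast [Nat.cast_sub hik.le] at hcast
    linarith [hcast]
  have hreflect : ∑ i ∈ Finset.range k, (1 : ℝ) / ((k : ℝ) - i)
      = ∑ j ∈ Finset.range k, (1 : ℝ) / (j + 1) := by
    rw [← Finset.sum_range_reflect (fun j => (1 : ℝ) / ((j : ℝ) + 1)) k]
    refine Finset.sum_congr rfl fun j hj => ?_
    have hjk := Finset.mem_range.1 hj
    have h1 : ((k - 1 - j : ℕ) : ℝ) = (k : ℝ) - 1 - (j : ℝ) := by
      have h2 : (k - 1 - j : ℕ) + j + 1 = k := by omega
      have h3 := congrArg (Nat.cast : ℕ → ℝ) h2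
      push_cast at h3
      linarith
    rw [h1]
    congr 1
    ring
  set H : ℝ := ∑ j ∈ Finset.range k, (1 : ℝ) / (j + 1) with hH
  have hH34 : H ≤ 1 + ((k : ℝ) - 1) / 2 := by
    rw [hH]
    conv_lhs => rw [show k = (k - 1) + 1 from by omega]
    rw [Finset.sum_range_succ']
    have hb : ∑ j ∈ Finset.range (k - 1), (1 : ℝ) / (((j + 1 : ℕ) : ℝ) + 1)
        ≤ ((k - 1 : ℕ) : ℝ) * (1 / 2) := by
      calc ∑ j ∈ Finset.range (k - 1), (1 : ℝ) / (((j + 1 : ℕ) : ℝ) + 1)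
          ≤ ∑ _j ∈ Finset.range (k - 1), (1 / 2 : ℝ) := by
            refine Finset.sum_le_sum fun j _ => ?_
            rw [div_le_div_iff₀ (by positivity) (by norm_num)]
            push_cast
            linarith
        _ = ((k - 1 : ℕ) : ℝ) * (1 / 2) := by
            rw [Finset.sum_const, Finset.card_range, nsmul_eq_mul]
    have hc : ((k - 1 : ℕ) : ℝ) = (k : ℝ) - 1 := by
      have h2 : (k - 1 : ℕ) + 1 = k := by omega
      have h3 := congrArg (Nat.cast : ℕ → ℝ) h2
      push_cast at h3
      linarith
    have h0 : (1 : ℝ) / (((0 : ℕ) : ℝ) + 1) = 1 := by norm_num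
    rw [hc] at hb
    linarith
  have part2 : (k : ℝ) / 4 ≤ (k : ℝ) - H := by
    have hk2 : (2 : ℝ) ≤ (k : ℝ) := by exact_mod_cast hk
    linarith
  refine ⟨?_, part2⟩
  -- main inequality
  have step1 : (k : ℝ) * (Nat.factorial k : ℝ)
      ≤ (∑ π : Equiv.Perm (Fin k), (A.mistakes (fun v => π (P v)) N : ℝ))
        + ∑ π : Equiv.Perm (Fin k), (Dc π : ℝ) := by
    rw [← Finset.sum_add_distrib]
    have : ∀ π ∈ (Finset.univ : Finset (Equiv.Perm (Fin k))),
        (k : ℝ) ≤ (A.mistakes (fun v => π (P v)) N : ℝ) + (Dc π : ℝ) := by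
      intro π _
      have := hsplit π
      have h' : (k : ℝ) ≤ ((A.mistakes (S13.yl P π) N + Dc π : ℕ) : ℝ) := by
        exact_mod_cast this
      push_cast at h'
      exact h'
    calc (k : ℝ) * (Nat.factorial k : ℝ)
        = ∑ _π : Equiv.Perm (Fin k), (k : ℝ) := by
          rw [Finset.sum_const, Finset.card_univ, Fintype.card_perm, Fintype.card_fin,
            nsmul_eq_mul, mul_comm]
      _ ≤ _ := Finset.sum_le_sum this
  have step2 : ∑ π : Equiv.Perm (Fin k), (Dc π : ℝ) ≤ H * (Nat.factorial k : ℝ) := by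
    have c1 : ∑ π : Equiv.Perm (Fin k), (Dc π : ℝ)
        ≤ ∑ i ∈ Finset.range k, ((Finset.univ.filter (S13.Pred A P N i)).card : ℝ) := by
      have := (Nat.cast_le (α := ℝ)).2 hswap
      push_cast at this
      exact this
    have c2 : ∑ i ∈ Finset.range k, ((Finset.univ.filter (S13.Pred A P N i)).card : ℝ)
        ≤ ∑ i ∈ Finset.range k, (Nat.factorial k : ℝ) / ((k : ℝ) - i) :=
      Finset.sum_le_sum hQ
    have c3 : ∑ i ∈ Finset.range k, (Nat.factorial k : ℝ) / ((k : ℝ) - i)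
        = H * (Nat.factorial k : ℝ) := by
      rw [← hreflect, Finset.sum_mul]
      refine Finset.sum_congr rfl fun i _ => ?_
      ring
    linarith
  linarith [step1, step2]
end

section
/- Let U be a finite set with |U| ≥ 4 and let Q_good be a set of good quadruples over U with |Q_good| = q_good > 0, and set ε = q_good/(8q) where q = 3·C(|U|,4). If a vertex a is not U-good, then the total number of good quadruples containing a is strictly less than ⌈4 q_good/|U|⌉. -/
open SimpleGraph

section Aux

variable {V : Type*} [DecidableEq V]

private lemma nat_id17 (n : ℕ) : n * (n-1) * ((n-2).choose 2) = 12 * n.choose 4 := by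
  rcases lt_or_ge n 4 with h | h
  · interval_cases n <;> decide
  · have h4 : 24 * n.choose 4 = n.descFactorial 4 := by
      rw [Nat.descFactorial_eq_factorial_mul_choose]; norm_num [Nat.factorial]
    have h2 : 2 * (n-2).choose 2 = (n-2).descFactorial 2 := by
      rw [Nat.descFactorial_eq_factorial_mul_choose]; norm_num [Nat.factorial]
    have e4 : n.descFactorial 4 = (n-3) * ((n-2) * ((n-1) * n)) := by
      simp [Nat.descFactorial_succ]
    have e2 : (n-2).descFactorial 2 = (n-2-1) * (n-2) := by
      simp [Nat.descFactorial_succ]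
    have h31 : n - 2 - 1 = n - 3 := by omega
    have : 2 * (n * (n-1) * ((n-2).choose 2)) = 2 * (12 * n.choose 4) := by
      calc 2 * (n * (n-1) * ((n-2).choose 2)) = n * (n-1) * (2 * (n-2).choose 2) := by ring
        _ = n * (n-1) * ((n-3)*(n-2)) := by rw [h2, e2, h31]
        _ = (n-3) * ((n-2) * ((n-1) * n)) := by ring
        _ = 24 * n.choose 4 := by rw [← e4, ← h4]
        _ = 2 * (12 * n.choose 4) := by ring
    omega

private lemma interval_comm17 (G : SimpleGraph V) (u v : V) :
    interval G u v = interval G v u := by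
  ext x
  simp only [interval, Set.mem_setOf_eq]
  have e1 : G.dist v x = G.dist x v := SimpleGraph.dist_comm
  have e2 : G.dist x u = G.dist u x := SimpleGraph.dist_comm
  have e3 : G.dist v u = G.dist u v := SimpleGraph.dist_comm
  omega

private lemma goodQuad_swap_left17 {G : SimpleGraph V} {a b c d : V}
    (h : GoodQuad G a b c d) : GoodQuad G b a c d := by
  obtain ⟨h1, h2, h3, h4, h5, h6, h7⟩ := h
  exact ⟨h1.symm, h4, h5, h2, h3, h6, by rwa [interval_comm17 G b a]⟩

private lemma goodQuad_swap_pairs17 {G : SimpleGraph V} {a b c d : V}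
    (h : GoodQuad G a b c d) : GoodQuad G c d a b := by
  obtain ⟨h1, h2, h3, h4, h5, h6, h7⟩ := h
  exact ⟨h6, h2.symm, h4.symm, h3.symm, h5.symm, h1, by rwa [Set.inter_comm]⟩

private lemma image_split_card17 (S : Finset V) (hS : S.card = 4) :
    ((S.powersetCard 2).image (fun P => ({P, S \ P} : Finset (Finset V)))).card = 3 := by
  obtain ⟨a, haS⟩ := Finset.card_pos.mp (by omega : 0 < S.card)
  have himg : (S.powersetCard 2).image (fun P => ({P, S \ P} : Finset (Finset V)))
      = ((S.powersetCard 2).filter (fun P => a ∈ P)).image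
        (fun P => ({P, S \ P} : Finset (Finset V))) := by
    apply Finset.Subset.antisymm
    · intro Q hQ
      obtain ⟨P, hP, rfl⟩ := Finset.mem_image.mp hQ
      obtain ⟨hPS, hPc⟩ := Finset.mem_powersetCard.mp hP
      by_cases haP : a ∈ P
      · exact Finset.mem_image.mpr ⟨P, Finset.mem_filter.mpr ⟨hP, haP⟩, rfl⟩
      · refine Finset.mem_image.mpr ⟨S \ P,
          Finset.mem_filter.mpr ⟨?_, Finset.mem_sdiff.mpr ⟨haS, haP⟩⟩, ?_⟩
        · exact Finset.mem_powersetCard.mpr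
            ⟨Finset.sdiff_subset, by rw [Finset.card_sdiff_of_subset hPS, hS, hPc]⟩
        · have : S \ (S \ P) = P := by
            rw [Finset.sdiff_sdiff_self_left, Finset.inter_eq_right.mpr hPS]
          rw [this, Finset.pair_comm]
    · exact Finset.image_subset_image (Finset.filter_subset _ _)
  rw [himg, Finset.card_image_of_injOn]
  · have hfe : (S.powersetCard 2).filter (fun P => a ∈ P)
        = (S.erase a).image (fun x => ({a, x} : Finset V)) := by
      ext P
      simp only [Finset.mem_filter, Finset.mem_powersetCard, Finset.mem_image, Finset.mem_erase]
      constructor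
      · rintro ⟨⟨hPS, hPc⟩, haP⟩
        obtain ⟨u, v, huv, rfl⟩ := Finset.card_eq_two.mp hPc
        rcases Finset.mem_insert.mp haP with rfl | hv
        · exact ⟨v, ⟨huv.symm, hPS (by simp)⟩, rfl⟩
        · rcases Finset.mem_singleton.mp hv with rfl
          exact ⟨u, ⟨huv, hPS (by simp)⟩, Finset.pair_comm a u⟩
      · rintro ⟨x, ⟨hxa, hxS⟩, rfl⟩
        refine ⟨⟨?_, Finset.card_pair (Ne.symm hxa)⟩, by simp⟩
        intro y hy
        rcases Finset.mem_insert.mp hy with rfl | hy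
        · exact haS
        · rcases Finset.mem_singleton.mp hy with rfl; exact hxS
    rw [hfe, Finset.card_image_of_injOn, Finset.card_erase_of_mem haS, hS]
    intro x hx y hy hxy
    simp only at hxy
    have hx' : x ∈ ({a, y} : Finset V) := by rw [← hxy]; simp
    rcases Finset.mem_insert.mp hx' with rfl | h
    · exact absurd rfl (Finset.mem_erase.mp hx).1
    · exact Finset.mem_singleton.mp h
  · intro P1 h1 P2 h2 heq
    have haP1 : a ∈ P1 := (Finset.mem_filter.mp h1).2
    have haP2 : a ∈ P2 := (Finset.mem_filter.mp h2).2
    simp only at heq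
    have : P1 ∈ ({P2, S \ P2} : Finset (Finset V)) := by rw [← heq]; simp
    rcases Finset.mem_insert.mp this with h | h
    · exact h
    · rcases Finset.mem_singleton.mp h with h'
      rw [h'] at haP1
      exact absurd haP2 (Finset.mem_sdiff.mp haP1).2

private lemma quadset_eq17 (U : Finset V) :
    QuadSet U = ↑((U.powersetCard 4).biUnion
      (fun S => (S.powersetCard 2).image (fun P => ({P, S \ P} : Finset (Finset V))))) := by
  ext Q
  simp only [Finset.coe_biUnion, Set.mem_iUnion, Finset.mem_coe, Finset.mem_image,
    Finset.mem_powersetCard, QuadSet, Set.mem_setOf_eq]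
  constructor
  · rintro ⟨a, b, c, d, ha, hb, hc, hd, hab, hac, had, hbc, hbd, hcd, rfl⟩
    refine ⟨{a,b,c,d}, ⟨?_, ?_⟩, {a,b}, ⟨?_, ?_⟩, ?_⟩
    · intro x hx
      simp only [Finset.mem_insert, Finset.mem_singleton] at hx
      rcases hx with rfl|rfl|rfl|rfl <;> assumption
    · rw [Finset.card_insert_of_notMem (by simp [hab, hac, had]),
        Finset.card_insert_of_notMem (by simp [hbc, hbd]), Finset.card_pair hcd]
    · intro x hx
      simp only [Finset.mem_insert, Finset.mem_singleton] at hx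
      rcases hx with rfl|rfl <;> simp
    · exact Finset.card_pair hab
    · have hsd : ({a,b,c,d} : Finset V) \ {a,b} = {c,d} := by
        ext x
        simp only [Finset.mem_sdiff, Finset.mem_insert, Finset.mem_singleton]
        constructor
        · rintro ⟨h1, h2⟩; push_neg at h2; tauto
        · rintro (rfl|rfl)
          · exact ⟨by tauto, by push_neg; exact ⟨hac.symm, hbc.symm⟩⟩
          · exact ⟨by tauto, by push_neg; exact ⟨had.symm, hbd.symm⟩⟩
      rw [hsd]
  · rintro ⟨S, ⟨hSU, hS4⟩, P, ⟨hPS, hP2⟩, rfl⟩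
    obtain ⟨a, b, hab, rfl⟩ := Finset.card_eq_two.mp hP2
    have hRc : (S \ {a,b}).card = 2 := by rw [Finset.card_sdiff_of_subset hPS, hS4, hP2]
    obtain ⟨c, d, hcd, hR⟩ := Finset.card_eq_two.mp hRc
    have hcm : c ∈ S \ ({a,b} : Finset V) := by rw [hR]; simp
    have hdm : d ∈ S \ ({a,b} : Finset V) := by rw [hR]; simp
    obtain ⟨hcS, hcP⟩ := Finset.mem_sdiff.mp hcm
    obtain ⟨hdS, hdP⟩ := Finset.mem_sdiff.mp hdm
    simp only [Finset.mem_insert, Finset.mem_singleton, not_or] at hcP hdP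
    refine ⟨a, b, c, d, hSU (hPS (by simp)), hSU (hPS (by simp)), hSU hcS, hSU hdS,
      hab, Ne.symm hcP.1, Ne.symm hdP.1, Ne.symm hcP.2, Ne.symm hdP.2, hcd, by rw [hR]⟩

private lemma pair_sup17 (S P : Finset V) (hPS : P ⊆ S) :
    ({P, S \ P} : Finset (Finset V)).sup id = S := by
  rw [Finset.sup_insert, Finset.sup_singleton]
  simp only [id]
  rw [Finset.sup_eq_union, Finset.union_sdiff_of_subset hPS]

private lemma quadSet_ncard17 (U : Finset V) :
    (QuadSet U).ncard = 3 * U.card.choose 4 := by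
  rw [quadset_eq17, Set.ncard_coe_finset, Finset.card_biUnion]
  · rw [Finset.sum_congr rfl
      (fun S hS => image_split_card17 S (Finset.mem_powersetCard.mp hS).2),
      Finset.sum_const, Finset.card_powersetCard, smul_eq_mul, mul_comm]
  · intro S1 h1 S2 h2 hne
    rw [Function.onFun, Finset.disjoint_left]
    intro Q hQ1 hQ2
    obtain ⟨P1, hP1, rfl⟩ := Finset.mem_image.mp hQ1
    obtain ⟨P2, hP2, heq⟩ := Finset.mem_image.mp hQ2
    apply hne
    rw [← pair_sup17 S1 P1 (Finset.mem_powersetCard.mp hP1).1,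
      ← pair_sup17 S2 P2 (Finset.mem_powersetCard.mp hP2).1, heq]

private lemma goodPairs_ncard_le17 (G : SimpleGraph V) (U : Finset V) {a b : V}
    (ha : a ∈ U) (hb : b ∈ U) (hab : a ≠ b) :
    (goodPairs G U a b).ncard ≤ (U.card - 2).choose 2 := by
  have hsub : goodPairs G U a b ⊆ ↑((U \ {a,b}).powersetCard 2) := by
    rintro s ⟨c, hc, d, hd, rfl, hq⟩
    obtain ⟨h1, h2, h3, h4, h5, h6, -⟩ := hq
    rw [Finset.mem_coe, Finset.mem_powersetCard]
    constructor
    · intro x hx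
      rcases Finset.mem_insert.mp hx with rfl | hx
      · exact Finset.mem_sdiff.mpr ⟨hc, by simp [Ne.symm h2, Ne.symm h4]⟩
      · rcases Finset.mem_singleton.mp hx with rfl
        exact Finset.mem_sdiff.mpr ⟨hd, by simp [Ne.symm h3, Ne.symm h5]⟩
    · exact Finset.card_pair h6
  calc (goodPairs G U a b).ncard ≤ (↑((U \ {a,b}).powersetCard 2) : Set (Finset V)).ncard :=
        Set.ncard_le_ncard hsub (Set.toFinite _)
    _ = ((U \ ({a,b} : Finset V)).powersetCard 2).card := Set.ncard_coe_finset _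
    _ = (U \ ({a,b} : Finset V)).card.choose 2 := Finset.card_powersetCard _ _
    _ = (U.card - 2).choose 2 := by
        rw [Finset.card_sdiff_of_subset (by
          intro x hx
          rcases Finset.mem_insert.mp hx with rfl | hx
          · exact ha
          · rcases Finset.mem_singleton.mp hx with rfl; exact hb), Finset.card_pair hab]

end Aux

/-- if `|U| ≥ 4`, there is at least one good quadruple over `U`,
and `a ∈ U` is not `U`-good, then the number of good quadruples containing `a`
is strictly less than `⌈4·q_good(U)/|U|⌉`. -/
theorem stmt17 {V : Type*} [Fintype V] [DecidableEq V] (G : SimpleGraph V)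
    (U : Finset V) (hU : 4 ≤ U.card) (hgood : 0 < (goodQuadSet G U).ncard)
    (a : V) (ha : a ∈ U) (hnot : ¬ UGood G U a) :
    ((goodQuadsContaining G U a).ncard : ℤ) <
      ⌈(4 * ((goodQuadSet G U).ncard : ℚ)) / (U.card : ℚ)⌉ := by
  classical
  have hfinp : ∀ b : V, (goodPairs G U a b).Finite := fun b => Set.toFinite _
  -- Step 1: good quadruples containing a inject into ⋃_{b ∈ U \ {a}} {{a,b}, s}, s ∈ goodPairs a b
  have hTsub : goodQuadsContaining G U a ⊆
      ↑((U.erase a).biUnion (fun b => ((hfinp b).toFinset.image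
        (fun s => ({{a, b}, s} : Finset (Finset V)))))) := by
    rintro Q ⟨⟨x, y, c, d, hx, hy, hc, hd, hq, rfl⟩, s, hs, has⟩
    simp only [Finset.coe_biUnion, Set.mem_iUnion, Finset.mem_coe, Finset.mem_image,
      Set.Finite.mem_toFinset]
    rcases Finset.mem_insert.mp hs with rfl | hs'
    · -- a ∈ {x, y}
      rcases Finset.mem_insert.mp has with rfl | h1
      · -- a = x
        exact ⟨y, Finset.mem_erase.mpr ⟨Ne.symm hq.1, hy⟩,
          ⟨{c, d}, ⟨c, hc, d, hd, rfl, hq⟩, rfl⟩⟩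
      · -- a = y
        rcases Finset.mem_singleton.mp h1 with rfl
        have hq' := goodQuad_swap_left17 hq
        refine ⟨x, Finset.mem_erase.mpr ⟨Ne.symm hq'.1, hx⟩,
          ⟨{c, d}, ⟨c, hc, d, hd, rfl, hq'⟩, ?_⟩⟩
        rw [Finset.pair_comm a x]
    · -- a ∈ {c, d}
      rcases Finset.mem_singleton.mp hs' with rfl
      have hq2 := goodQuad_swap_pairs17 hq
      rcases Finset.mem_insert.mp has with rfl | h1
      · -- a = c
        refine ⟨d, Finset.mem_erase.mpr ⟨Ne.symm hq2.1, hd⟩,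
          ⟨{x, y}, ⟨x, hx, y, hy, rfl, hq2⟩, ?_⟩⟩
        rw [Finset.pair_comm ({a, d} : Finset V)]
      · -- a = d
        rcases Finset.mem_singleton.mp h1 with rfl
        have hq3 := goodQuad_swap_left17 hq2
        refine ⟨c, Finset.mem_erase.mpr ⟨Ne.symm hq3.1, hc⟩,
          ⟨{x, y}, ⟨x, hx, y, hy, rfl, hq3⟩, ?_⟩⟩
        rw [Finset.pair_comm a c, Finset.pair_comm ({c, a} : Finset V)]
  have hcard1 : (goodQuadsContaining G U a).ncard ≤
      ∑ b ∈ U.erase a, (goodPairs G U a b).ncard := by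
    calc (goodQuadsContaining G U a).ncard
        ≤ ((U.erase a).biUnion (fun b => ((hfinp b).toFinset.image
            (fun s => ({{a, b}, s} : Finset (Finset V)))))).card := by
          rw [← Set.ncard_coe_finset]
          exact Set.ncard_le_ncard hTsub (Set.toFinite _)
      _ ≤ ∑ b ∈ U.erase a, ((hfinp b).toFinset.image
            (fun s => ({{a, b}, s} : Finset (Finset V)))).card := Finset.card_biUnion_le
      _ ≤ ∑ b ∈ U.erase a, (goodPairs G U a b).ncard :=
          Finset.sum_le_sum fun b _ =>
            Finset.card_image_le.trans_eq (Set.ncard_eq_toFinset_card _ (hfinp b)).symm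
  -- Step 2: numeric constants
  set ε := epsU G U with hε
  set M1 := ⌈4 * ε * ((U.card : ℚ) - 1)⌉ with hM1
  set M2 := ⌈4 * ε * (((U.card - 2).choose 2 : ℕ) : ℚ)⌉ with hM2
  have hsubQ : goodQuadSet G U ⊆ QuadSet U := by
    rintro Q ⟨a', b', c', d', ha', hb', hc', hd', hq, rfl⟩
    exact ⟨a', b', c', d', ha', hb', hc', hd', hq.1, hq.2.1, hq.2.2.1, hq.2.2.2.1,
      hq.2.2.2.2.1, hq.2.2.2.2.2.1, rfl⟩
  have hqspos : 0 < (QuadSet U).ncard :=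
    lt_of_lt_of_le hgood (Set.ncard_le_ncard hsubQ (Set.toFinite _))
  have hchpos : 0 < (U.card - 2).choose 2 := Nat.choose_pos (by omega)
  have hch4pos : 0 < U.card.choose 4 := Nat.choose_pos hU
  have hεpos : (0 : ℚ) < ε := by
    rw [hε]
    have h1 : (0:ℚ) < ((goodQuadSet G U).ncard : ℚ) := by exact_mod_cast hgood
    have h2 : (0:ℚ) < 8 * ((QuadSet U).ncard : ℚ) := by
      have : (0:ℚ) < ((QuadSet U).ncard : ℚ) := by exact_mod_cast hqspos
      linarith
    exact div_pos h1 h2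
  have hn1Q : (0:ℚ) < (U.card : ℚ) - 1 := by
    have : (4:ℚ) ≤ (U.card : ℚ) := by exact_mod_cast hU
    linarith
  have hCQ : (0:ℚ) < (((U.card - 2).choose 2 : ℕ) : ℚ) := by exact_mod_cast hchpos
  have hM1pos : 1 ≤ M1 := Int.ceil_pos.mpr (mul_pos (mul_pos (by norm_num) hεpos) hn1Q)
  have hM2pos : 1 ≤ M2 := Int.ceil_pos.mpr (mul_pos (mul_pos (by norm_num) hεpos) hCQ)
  -- Step 3: the set of "rich" b's is small since a is not U-good
  set B := (U.erase a).filter (fun b => M2 ≤ ((goodPairs G U a b).ncard : ℤ)) with hB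
  have hBle : (B.card : ℤ) ≤ M1 - 1 := by
    by_contra hcon
    push_neg at hcon
    exact hnot ⟨B, (Finset.filter_subset _ _).trans (Finset.erase_subset _ _),
      by rw [← hε, ← hM1]; omega, fun b hb => (Finset.mem_filter.mp hb).2⟩
  -- Step 4: bound the sum
  have hCle : ∀ b ∈ U.erase a,
      ((goodPairs G U a b).ncard : ℤ) ≤ (((U.card - 2).choose 2 : ℕ) : ℤ) := by
    intro b hb
    obtain ⟨hba, hbU⟩ := Finset.mem_erase.mp hb
    exact_mod_cast goodPairs_ncard_le17 G U ha hbU (Ne.symm hba)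
  have hA : ∑ b ∈ B, ((goodPairs G U a b).ncard : ℤ)
      ≤ (B.card : ℤ) * (((U.card - 2).choose 2 : ℕ) : ℤ) := by
    calc ∑ b ∈ B, ((goodPairs G U a b).ncard : ℤ)
        ≤ B.card • (((U.card - 2).choose 2 : ℕ) : ℤ) :=
          Finset.sum_le_card_nsmul _ _ _
            (fun b hb => hCle b (Finset.filter_subset _ _ hb))
      _ = (B.card : ℤ) * (((U.card - 2).choose 2 : ℕ) : ℤ) := nsmul_eq_mul _ _
  have hRcard : (((U.erase a).filter
      (fun b => ¬ (M2 ≤ ((goodPairs G U a b).ncard : ℤ)))).card : ℤ) ≤ (U.card : ℤ) - 1 := by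
    have h1 : ((U.erase a).filter
        (fun b => ¬ (M2 ≤ ((goodPairs G U a b).ncard : ℤ)))).card ≤ (U.erase a).card :=
      Finset.card_le_card (Finset.filter_subset _ _)
    have h2 : (U.erase a).card = U.card - 1 := Finset.card_erase_of_mem ha
    omega
  have hR : ∑ b ∈ (U.erase a).filter (fun b => ¬ (M2 ≤ ((goodPairs G U a b).ncard : ℤ))),
      ((goodPairs G U a b).ncard : ℤ) ≤ ((U.card : ℤ) - 1) * (M2 - 1) := by
    calc ∑ b ∈ (U.erase a).filter (fun b => ¬ (M2 ≤ ((goodPairs G U a b).ncard : ℤ))),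
        ((goodPairs G U a b).ncard : ℤ)
        ≤ ((U.erase a).filter
            (fun b => ¬ (M2 ≤ ((goodPairs G U a b).ncard : ℤ)))).card • (M2 - 1) := by
          refine Finset.sum_le_card_nsmul _ _ _ (fun b hb => ?_)
          have := (Finset.mem_filter.mp hb).2
          omega
      _ = (((U.erase a).filter
            (fun b => ¬ (M2 ≤ ((goodPairs G U a b).ncard : ℤ)))).card : ℤ) * (M2 - 1) :=
          nsmul_eq_mul _ _
      _ ≤ ((U.card : ℤ) - 1) * (M2 - 1) :=
          mul_le_mul_of_nonneg_right hRcard (by omega)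
  have htotal : ((goodQuadsContaining G U a).ncard : ℤ)
      ≤ (M1 - 1) * (((U.card - 2).choose 2 : ℕ) : ℤ) + ((U.card : ℤ) - 1) * (M2 - 1) := by
    have hsplit := Finset.sum_filter_add_sum_filter_not (U.erase a)
      (fun b => M2 ≤ ((goodPairs G U a b).ncard : ℤ))
      (fun b => ((goodPairs G U a b).ncard : ℤ))
    have hc1 : ((goodQuadsContaining G U a).ncard : ℤ)
        ≤ ∑ b ∈ U.erase a, ((goodPairs G U a b).ncard : ℤ) := by
      calc ((goodQuadsContaining G U a).ncard : ℤ)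
          ≤ ((∑ b ∈ U.erase a, (goodPairs G U a b).ncard : ℕ) : ℤ) := by exact_mod_cast hcard1
        _ = ∑ b ∈ U.erase a, ((goodPairs G U a b).ncard : ℤ) := by push_cast; rfl
    have hBC : (B.card : ℤ) * (((U.card - 2).choose 2 : ℕ) : ℤ)
        ≤ (M1 - 1) * (((U.card - 2).choose 2 : ℕ) : ℤ) :=
      mul_le_mul_of_nonneg_right hBle (by positivity)
    rw [← hB] at hsplit
    omega
  -- Step 5: rational estimate
  have hkeyQ : (U.card : ℚ) * ((U.card : ℚ) - 1) * (((U.card - 2).choose 2 : ℕ) : ℚ)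
      = 12 * ((U.card.choose 4 : ℕ) : ℚ) := by
    have hnat := nat_id17 U.card
    have h1 : ((U.card - 1 : ℕ) : ℚ) = (U.card : ℚ) - 1 := by
      rw [Nat.cast_sub (by omega)]; norm_num
    calc (U.card : ℚ) * ((U.card : ℚ) - 1) * (((U.card - 2).choose 2 : ℕ) : ℚ)
        = ((U.card * (U.card - 1) * ((U.card - 2).choose 2) : ℕ) : ℚ) := by
          push_cast [h1]; ring
      _ = ((12 * U.card.choose 4 : ℕ) : ℚ) := by rw [hnat]
      _ = 12 * ((U.card.choose 4 : ℕ) : ℚ) := by push_cast; ring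
  have hqsQ : ((QuadSet U).ncard : ℚ) = 3 * ((U.card.choose 4 : ℕ) : ℚ) := by
    rw [quadSet_ncard17]; push_cast; ring
  have hid : (4 * ε * ((U.card : ℚ) - 1)) * (((U.card - 2).choose 2 : ℕ) : ℚ)
      + ((U.card : ℚ) - 1) * (4 * ε * (((U.card - 2).choose 2 : ℕ) : ℚ))
      = 4 * ((goodQuadSet G U).ncard : ℚ) / (U.card : ℚ) := by
    rw [hε]
    unfold epsU
    rw [hqsQ]
    have hch4Q : (0:ℚ) < ((U.card.choose 4 : ℕ) : ℚ) := by exact_mod_cast hch4pos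
    have hnQ : (0:ℚ) < (U.card : ℚ) := by linarith
    field_simp
    linear_combination 2 * hkeyQ
  have hM1lt : (M1 : ℚ) < 4 * ε * ((U.card : ℚ) - 1) + 1 := by
    rw [hM1]; exact Int.ceil_lt_add_one _
  have hM2lt : (M2 : ℚ) < 4 * ε * (((U.card - 2).choose 2 : ℕ) : ℚ) + 1 := by
    rw [hM2]; exact Int.ceil_lt_add_one _
  have hfinal : (((M1 - 1) * (((U.card - 2).choose 2 : ℕ) : ℤ)
      + ((U.card : ℤ) - 1) * (M2 - 1) : ℤ) : ℚ)
      < 4 * ((goodQuadSet G U).ncard : ℚ) / (U.card : ℚ) := by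
    have t1 : ((M1 : ℚ) - 1) * (((U.card - 2).choose 2 : ℕ) : ℚ)
        < (4 * ε * ((U.card : ℚ) - 1)) * (((U.card - 2).choose 2 : ℕ) : ℚ) :=
      mul_lt_mul_of_pos_right (by linarith) hCQ
    have t2 : ((U.card : ℚ) - 1) * ((M2 : ℚ) - 1)
        < ((U.card : ℚ) - 1) * (4 * ε * (((U.card - 2).choose 2 : ℕ) : ℚ)) :=
      mul_lt_mul_of_pos_left (by linarith) hn1Q
    push_cast
    linarith [hid]
  rw [Int.lt_ceil]
  have hle : (((goodQuadsContaining G U a).ncard : ℤ) : ℚ)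
      ≤ (((M1 - 1) * (((U.card - 2).choose 2 : ℕ) : ℤ)
        + ((U.card : ℤ) - 1) * (M2 - 1) : ℤ) : ℚ) := by exact_mod_cast htotal
  calc ((goodQuadsContaining G U a).ncard : ℚ)
      ≤ _ := hle
    _ < _ := hfinal
end
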